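/- arXiv:2210.12325 — 5 statements merged into one kernel-verified Lean document; each statement's English description precedes it below -/
import Mathlib

section
/- Let D be the unique derivation of the polynomial ring ℚ[x,y] determined by D(x) = x·y and D(y) = x². Then for every n ≥ 0, Dⁿ(x) = Σ_{k=0}^{⌊n/2⌋} L(n,k)·x^{2k+1}·y^{n−2k}, where L(n,k) is the number of permutations of [n] with exactly k left peaks (in particular D⁰(x) = x since L(0,0) = 1). -/
open MvPolynomial

/-- The `i`-th entry (1-indexed) of the permutation `σ` of `[n]`, with the
convention that positions `0` and `> n` carry the entry `0`. -/
def permEntry (n : ℕ) (σ : Equiv.Perm (Fin n)) (i : ℕ) : ℕ :=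
  if h : 1 ≤ i ∧ i ≤ n then ((σ ⟨i - 1, by omega⟩ : Fin n) : ℕ) + 1 else 0

/-- The number of left peaks of `σ`: indices `1 ≤ i ≤ n-1` with
`σ_{i-1} < σ_i > σ_{i+1}`, convention `σ₀ = 0`. -/
def leftPeakCount (n : ℕ) (σ : Equiv.Perm (Fin n)) : ℕ :=
  ((Finset.Icc 1 (n - 1)).filter fun i =>
    permEntry n σ (i - 1) < permEntry n σ i ∧ permEntry n σ (i + 1) < permEntry n σ i).card

/-- The number of exterior peaks of `σ`: indices `1 ≤ i ≤ n` with
`σ_{i-1} < σ_i > σ_{i+1}`, conventions `σ₀ = σ_{n+1} = 0`. -/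
def extPeakCount (n : ℕ) (σ : Equiv.Perm (Fin n)) : ℕ :=
  ((Finset.Icc 1 n).filter fun i =>
    permEntry n σ (i - 1) < permEntry n σ i ∧ permEntry n σ (i + 1) < permEntry n σ i).card

/-- The number of interior peaks of `σ`: indices `2 ≤ i ≤ n-1` with
`σ_{i-1} < σ_i > σ_{i+1}`. -/
def intPeakCount (n : ℕ) (σ : Equiv.Perm (Fin n)) : ℕ :=
  ((Finset.Icc 2 (n - 1)).filter fun i =>
    permEntry n σ (i - 1) < permEntry n σ i ∧ permEntry n σ (i + 1) < permEntry n σ i).card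

/-- The number of up-down runs of `σ`: maximal monotone segments of the
extended sequence `0, σ₁, …, σₙ`, i.e. one more than the number of direction
changes of that sequence (and `0` for `n = 0`). -/
def udRunCount (n : ℕ) (σ : Equiv.Perm (Fin n)) : ℕ :=
  if n = 0 then 0 else
    1 + ((Finset.Icc 1 (n - 1)).filter fun i =>
      (permEntry n σ (i - 1) < permEntry n σ i ∧ permEntry n σ (i + 1) < permEntry n σ i) ∨
      (permEntry n σ i < permEntry n σ (i - 1) ∧ permEntry n σ i < permEntry n σ (i + 1))).card

/-- The number of alternating runs of `σ`: maximal monotone segments of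
`σ₁, …, σₙ`, i.e. one more than the number of direction changes (and `0` for `n = 0`). -/
def altRunCount (n : ℕ) (σ : Equiv.Perm (Fin n)) : ℕ :=
  if n = 0 then 0 else
    1 + ((Finset.Icc 2 (n - 1)).filter fun i =>
      (permEntry n σ (i - 1) < permEntry n σ i ∧ permEntry n σ (i + 1) < permEntry n σ i) ∨
      (permEntry n σ i < permEntry n σ (i - 1) ∧ permEntry n σ i < permEntry n σ (i + 1))).card

/-- `L n k` : the number of permutations of `[n]` with exactly `k` left peaks. -/
def leftPeakNum (n k : ℕ) : ℕ :=
  (Finset.univ.filter fun σ : Equiv.Perm (Fin n) => leftPeakCount n σ = k).card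

/-- `W n k` : the number of permutations of `[n]` with exactly `k` exterior peaks. -/
def extPeakNum (n k : ℕ) : ℕ :=
  (Finset.univ.filter fun σ : Equiv.Perm (Fin n) => extPeakCount n σ = k).card

/-- `M n k` : the number of permutations of `[n]` with exactly `k` interior peaks. -/
def intPeakNum (n k : ℕ) : ℕ :=
  (Finset.univ.filter fun σ : Equiv.Perm (Fin n) => intPeakCount n σ = k).card

/-- `Λ n k` : the number of permutations of `[n]` with exactly `k` up-down runs. -/
def udRunNum (n k : ℕ) : ℕ :=
  (Finset.univ.filter fun σ : Equiv.Perm (Fin n) => udRunCount n σ = k).card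

/-- `R n k` : the number of permutations of `[n]` with exactly `k` alternating runs. -/
def altRunNum (n k : ℕ) : ℕ :=
  (Finset.univ.filter fun σ : Equiv.Perm (Fin n) => altRunCount n σ = k).card

open Finset Equiv

def pkSet (n : ℕ) (σ : Equiv.Perm (Fin n)) : Finset ℕ :=
  (Finset.Icc 1 (n - 1)).filter fun i =>
    permEntry n σ (i - 1) < permEntry n σ i ∧ permEntry n σ (i + 1) < permEntry n σ i

lemma leftPeakCount_eq (n : ℕ) (σ : Equiv.Perm (Fin n)) :
    leftPeakCount n σ = (pkSet n σ).card := rfl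

lemma permEntry_le (n : ℕ) (σ : Equiv.Perm (Fin n)) (i : ℕ) : permEntry n σ i ≤ n := by
  unfold permEntry
  split
  · exact Nat.succ_le_of_lt (Fin.is_lt _)
  · exact Nat.zero_le _

lemma permEntry_of_not (n : ℕ) (σ : Equiv.Perm (Fin n)) (i : ℕ) (h : ¬ (1 ≤ i ∧ i ≤ n)) :
    permEntry n σ i = 0 := by unfold permEntry; rw [dif_neg h]

lemma mem_pkSet_range {n : ℕ} {σ : Equiv.Perm (Fin n)} {j : ℕ} (h : j ∈ pkSet n σ) :
    1 ≤ j ∧ j ≤ n - 1 := by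
  have := (Finset.mem_filter.1 h).1; exact Finset.mem_Icc.1 this

lemma pkSet_not_adjacent {n : ℕ} {σ : Equiv.Perm (Fin n)} {j : ℕ}
    (h1 : j ∈ pkSet n σ) (h2 : j + 1 ∈ pkSet n σ) : False := by
  have a1 := (Finset.mem_filter.1 h1).2.2
  have a2 := (Finset.mem_filter.1 h2).2.1
  rw [Nat.add_sub_cancel] at a2
  omega

/-- insertion: put the value `n` (max) at position `p` of `σ` (0-indexed). -/
def ins {n : ℕ} (σ : Equiv.Perm (Fin n)) (p : Fin (n + 1)) : Equiv.Perm (Fin (n + 1)) :=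
  (finSuccEquiv' p).trans ((σ.optionCongr).trans (finSuccEquiv' (Fin.last n)).symm)

lemma ins_apply_self {n : ℕ} (σ : Equiv.Perm (Fin n)) (p : Fin (n + 1)) :
    ins σ p p = Fin.last n := by
  simp [ins, finSuccEquiv'_at]

lemma ins_apply_lt {n : ℕ} (σ : Equiv.Perm (Fin n)) (p : Fin (n + 1)) (j : Fin n)
    (h : j.castSucc < p) : ins σ p j.castSucc = (σ j).castSucc := by
  simp [ins, finSuccEquiv'_below h, Fin.succAbove_last]

lemma ins_apply_ge {n : ℕ} (σ : Equiv.Perm (Fin n)) (p : Fin (n + 1)) (j : Fin n)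
    (h : p ≤ j.castSucc) : ins σ p j.succ = (σ j).castSucc := by
  simp [ins, finSuccEquiv'_above h, Fin.succAbove_last]

lemma permEntry_ins_low {n : ℕ} (σ : Equiv.Perm (Fin n)) (p : Fin (n + 1)) (i : ℕ)
    (h : i ≤ (p : ℕ)) : permEntry (n + 1) (ins σ p) i = permEntry n σ i := by
  rcases Nat.eq_zero_or_pos i with h0 | h1
  · subst h0
    rw [permEntry_of_not, permEntry_of_not] <;> omega
  · have hin : 1 ≤ i ∧ i ≤ n := ⟨h1, by have := p.is_le; omega⟩
    have hlt : i - 1 < n := by omega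
    unfold permEntry
    rw [dif_pos ⟨h1, by omega⟩, dif_pos hin]
    have : (⟨i - 1, by omega⟩ : Fin (n + 1)) = (⟨i - 1, hlt⟩ : Fin n).castSucc := rfl
    rw [this, ins_apply_lt σ p _ (by simp [Fin.lt_def]; omega)]
    simp

lemma permEntry_ins_at {n : ℕ} (σ : Equiv.Perm (Fin n)) (p : Fin (n + 1)) :
    permEntry (n + 1) (ins σ p) ((p : ℕ) + 1) = n + 1 := by
  have hp := p.is_le
  unfold permEntry
  rw [dif_pos ⟨by omega, by omega⟩]
  have : (⟨(p : ℕ) + 1 - 1, by omega⟩ : Fin (n + 1)) = p := by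
    apply Fin.ext; simp
  rw [this, ins_apply_self]
  simp [Fin.last]

lemma permEntry_ins_high {n : ℕ} (σ : Equiv.Perm (Fin n)) (p : Fin (n + 1)) (i : ℕ)
    (h : (p : ℕ) + 2 ≤ i) : permEntry (n + 1) (ins σ p) i = permEntry n σ (i - 1) := by
  rcases Nat.lt_or_ge (n + 1) i with hbig | hle
  · rw [permEntry_of_not, permEntry_of_not] <;> omega
  · have hin : 1 ≤ i - 1 ∧ i - 1 ≤ n := ⟨by omega, by omega⟩
    have hlt : i - 2 < n := by omega
    unfold permEntry
    rw [dif_pos ⟨by omega, hle⟩, dif_pos hin]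
    have : (⟨i - 1, by omega⟩ : Fin (n + 1)) = (⟨i - 2, hlt⟩ : Fin n).succ := by
      apply Fin.ext; simp; omega
    rw [this, ins_apply_ge σ p _ (by simp [Fin.le_def]; omega)]
    simp
    congr 1

lemma pkSet_ins {n : ℕ} (σ : Equiv.Perm (Fin n)) (p : Fin (n + 1)) :
    pkSet (n + 1) (ins σ p) =
      ((pkSet n σ).filter (· < (p : ℕ))) ∪
      (if (p : ℕ) < n then {(p : ℕ) + 1} else ∅) ∪
      ((pkSet n σ).filter ((p : ℕ) + 1 < ·)).image (· + 1) := by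
  have hp := p.is_le
  ext i
  simp only [Finset.mem_union, Finset.mem_filter, Finset.mem_image, pkSet, Finset.mem_Icc,
    Nat.add_sub_cancel]
  constructor
  · rintro ⟨⟨h1, h2⟩, hl, hr⟩
    rcases lt_trichotomy i ((p : ℕ) + 1) with hi | hi | hi
    · -- i ≤ p; show i < p and transfer
      have hip : i ≤ (p : ℕ) := by omega
      have hne : i ≠ (p : ℕ) := by
        intro he
        rw [he, permEntry_ins_at] at hr
        have := permEntry_le (n + 1) (ins σ p) (p : ℕ)
        omega
      have hilt : i < (p : ℕ) := by omega
      left; left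
      rw [permEntry_ins_low σ p (i-1) (by omega), permEntry_ins_low σ p i hip] at hl
      rw [permEntry_ins_low σ p i hip, permEntry_ins_low σ p (i+1) (by omega)] at hr
      exact ⟨⟨⟨h1, by omega⟩, hl, hr⟩, hilt⟩
    · -- i = p + 1 : middle
      left; right
      rw [if_pos (by omega)]
      simp [hi]
    · -- i ≥ p + 2
      have hne : i ≠ (p : ℕ) + 2 := by
        intro he
        rw [(by omega : i - 1 = (p : ℕ) + 1), permEntry_ins_at] at hl
        have := permEntry_le (n + 1) (ins σ p) i
        omega
      have hge : (p : ℕ) + 3 ≤ i := by omega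
      right
      refine ⟨i - 1, ⟨⟨⟨by omega, by omega⟩, ?_, ?_⟩, by omega⟩, by omega⟩
      · rw [permEntry_ins_high σ p (i-1) (by omega)] at hl
        rw [permEntry_ins_high σ p i (by omega)] at hl
        rw [(by omega : i - 1 - 1 = i - 1 - 1)]
        exact hl
      · rw [permEntry_ins_high σ p i (by omega)] at hr
        rw [permEntry_ins_high σ p (i+1) (by omega)] at hr
        rw [(by omega : i - 1 + 1 = i + 1 - 1)]
        exact hr
  · rintro ((⟨⟨⟨h1, h2⟩, hl, hr⟩, hlt⟩ | hmid) | ⟨j, ⟨⟨⟨h1, h2⟩, hl, hr⟩, hgt⟩, rfl⟩)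
    · refine ⟨⟨h1, by omega⟩, ?_, ?_⟩
      · rw [permEntry_ins_low σ p (i-1) (by omega), permEntry_ins_low σ p i (by omega)]
        exact hl
      · rw [permEntry_ins_low σ p i (by omega), permEntry_ins_low σ p (i+1) (by omega)]
        exact hr
    · by_cases hc : (p : ℕ) < n
      · rw [if_pos hc] at hmid
        simp only [Finset.mem_singleton] at hmid
        subst hmid
        refine ⟨⟨by omega, by omega⟩, ?_, ?_⟩
        · rw [permEntry_ins_at, permEntry_ins_low σ p ((p:ℕ)+1-1) (by omega)]
          have := permEntry_le n σ ((p:ℕ)+1-1); omega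
        · rw [permEntry_ins_at, permEntry_ins_high σ p ((p:ℕ)+1+1) (by omega)]
          have := permEntry_le n σ ((p:ℕ)+1+1-1); omega
      · rw [if_neg hc] at hmid; simp at hmid
    · refine ⟨⟨by omega, by omega⟩, ?_, ?_⟩
      · rw [(by omega : j + 1 - 1 = j), permEntry_ins_high σ p j (by omega),
          permEntry_ins_high σ p (j+1) (by omega), Nat.add_sub_cancel]
        exact hl
      · rw [permEntry_ins_high σ p (j+1) (by omega), permEntry_ins_high σ p (j+1+1) (by omega),
          Nat.add_sub_cancel, Nat.add_sub_cancel]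
        exact hr

lemma leftPeakCount_ins {n : ℕ} (σ : Equiv.Perm (Fin n)) (p : Fin (n + 1)) :
    leftPeakCount (n + 1) (ins σ p) = leftPeakCount n σ +
      (if (p : ℕ) = n ∨ (p : ℕ) ∈ pkSet n σ ∨ (p : ℕ) + 1 ∈ pkSet n σ then 0 else 1) := by
  classical
  have hp := p.is_le
  rw [leftPeakCount_eq, leftPeakCount_eq, pkSet_ins]
  set P := (p : ℕ) with hP
  set PW := pkSet n σ with hPW
  set A := PW.filter (· < P) with hA
  set C := PW.filter (P + 1 < ·) with hC
  -- card of new pkSet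
  have hd1 : Disjoint A (if P < n then ({P + 1} : Finset ℕ) else ∅) := by
    rw [Finset.disjoint_left]
    intro a ha hb
    have h1 := Finset.mem_filter.1 ha
    split at hb <;> simp_all <;> omega
  have hd2 : Disjoint (A ∪ (if P < n then ({P + 1} : Finset ℕ) else ∅)) (C.image (· + 1)) := by
    rw [Finset.disjoint_left]
    intro a ha hb
    rcases Finset.mem_image.1 hb with ⟨j, hj, rfl⟩
    have hj2 := (Finset.mem_filter.1 hj).2
    rcases Finset.mem_union.1 ha with ha | ha
    · have := (Finset.mem_filter.1 ha).2; omega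
    · split at ha <;> simp_all <;> omega
  rw [Finset.card_union_of_disjoint hd2, Finset.card_union_of_disjoint hd1,
    Finset.card_image_of_injOn (fun a _ b _ h => by omega)]
  -- card of old pkSet split three ways
  have e1 : A.card + (PW.filter fun j => ¬ j < P).card = PW.card :=
    Finset.card_filter_add_card_filter_not _
  have e2 : ((PW.filter fun j => ¬ j < P).filter fun j => j ≤ P + 1).card +
      ((PW.filter fun j => ¬ j < P).filter fun j => ¬ j ≤ P + 1).card
      = (PW.filter fun j => ¬ j < P).card :=
    Finset.card_filter_add_card_filter_not _
  have e3 : (PW.filter fun j => ¬ j < P).filter (fun j => ¬ j ≤ P + 1) = C := by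
    rw [Finset.filter_filter]
    apply Finset.filter_congr
    intro j _
    simp; omega
  have e4 : (PW.filter fun j => ¬ j < P).filter (fun j => j ≤ P + 1) =
      PW.filter fun j => j = P ∨ j = P + 1 := by
    rw [Finset.filter_filter]
    apply Finset.filter_congr
    intro j _
    simp; omega
  rw [e3, e4] at e2
  set B := PW.filter fun j => j = P ∨ j = P + 1 with hB
  -- B's card
  have hBcard : B.card = if P ∈ PW ∨ P + 1 ∈ PW then 1 else 0 := by
    by_cases h1 : P ∈ PW <;> by_cases h2 : P + 1 ∈ PW
    · exact absurd (pkSet_not_adjacent h1 h2) (by simp)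
    · rw [if_pos (Or.inl h1)]
      have : B = {P} := by
        ext j
        simp only [hB, Finset.mem_filter, Finset.mem_singleton]
        constructor
        · rintro ⟨hj, rfl | rfl⟩
          · rfl
          · exact absurd hj h2
        · rintro rfl; exact ⟨h1, Or.inl rfl⟩
      rw [this]; rfl
    · rw [if_pos (Or.inr h2)]
      have : B = {P + 1} := by
        ext j
        simp only [hB, Finset.mem_filter, Finset.mem_singleton]
        constructor
        · rintro ⟨hj, rfl | rfl⟩
          · exact absurd hj h1
          · rfl
        · rintro rfl; exact ⟨h2, Or.inr rfl⟩
      rw [this]; rfl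
    · rw [if_neg (by tauto)]
      rw [Finset.card_eq_zero]
      ext j
      simp only [hB, Finset.mem_filter, Finset.notMem_empty, iff_false]
      rintro ⟨hj, rfl | rfl⟩
      · exact h1 hj
      · exact h2 hj
  -- boundedness facts
  have hbnd : ∀ j ∈ PW, 1 ≤ j ∧ j ≤ n - 1 := fun j hj => mem_pkSet_range hj
  by_cases hpn : P = n
  · have hB0 : B.card = 0 := by
      rw [hBcard, if_neg]
      rintro (h | h) <;> have := hbnd _ h <;> omega
    rw [if_pos (Or.inl hpn), if_neg (by omega)]
    simp only [Finset.card_empty] at *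
    omega
  · have hifn : (if P < n then ({P + 1} : Finset ℕ) else ∅).card = 1 := by
      rw [if_pos (by omega)]; rfl
    by_cases hQ : P ∈ PW ∨ P + 1 ∈ PW
    · rw [if_pos (Or.inr hQ)]
      rw [hBcard, if_pos hQ] at e2
      omega
    · have hcond : ¬(P = n ∨ P ∈ PW ∨ P + 1 ∈ PW) := by
        rintro (h | h | h)
        · exact hpn h
        · exact hQ (Or.inl h)
        · exact hQ (Or.inr h)
      rw [if_neg hcond]
      rw [hBcard, if_neg hQ] at e2
      omega

lemma card_neutral (n : ℕ) (σ : Equiv.Perm (Fin n)) :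
    ((Finset.range (n + 1)).filter fun P =>
      P = n ∨ P ∈ pkSet n σ ∨ P + 1 ∈ pkSet n σ).card = 2 * leftPeakCount n σ + 1 := by
  classical
  have hbnd : ∀ j ∈ pkSet n σ, 1 ≤ j ∧ j ≤ n - 1 := fun j hj => mem_pkSet_range hj
  have hset : ((Finset.range (n + 1)).filter fun P =>
      P = n ∨ P ∈ pkSet n σ ∨ P + 1 ∈ pkSet n σ) =
      ({n} : Finset ℕ) ∪ pkSet n σ ∪ (pkSet n σ).image (· - 1) := by
    ext P
    simp only [Finset.mem_filter, Finset.mem_range, Finset.mem_union, Finset.mem_singleton,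
      Finset.mem_image]
    constructor
    · rintro ⟨hlt, rfl | h | h⟩
      · exact Or.inl (Or.inl rfl)
      · exact Or.inl (Or.inr h)
      · exact Or.inr ⟨P + 1, h, by omega⟩
    · rintro ((rfl | h) | ⟨j, hj, rfl⟩)
      · exact ⟨by omega, Or.inl rfl⟩
      · have := hbnd _ h
        exact ⟨by omega, Or.inr (Or.inl h)⟩
      · have := hbnd _ hj
        refine ⟨by omega, Or.inr (Or.inr ?_)⟩
        rwa [(by omega : j - 1 + 1 = j)]
  rw [hset]
  have hd1 : Disjoint ({n} : Finset ℕ) (pkSet n σ) := by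
    rw [Finset.disjoint_left]
    intro a ha hb
    have := hbnd _ hb
    simp at ha
    omega
  have hd2 : Disjoint (({n} : Finset ℕ) ∪ pkSet n σ) ((pkSet n σ).image (· - 1)) := by
    rw [Finset.disjoint_left]
    intro a ha hb
    rcases Finset.mem_image.1 hb with ⟨j, hj, rfl⟩
    have hjb := hbnd _ hj
    rcases Finset.mem_union.1 ha with ha | ha
    · simp at ha; omega
    · have := hbnd _ ha
      have : j - 1 + 1 = j := by omega
      exact pkSet_not_adjacent ha (by rwa [this])
  rw [Finset.card_union_of_disjoint hd2, Finset.card_union_of_disjoint hd1,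
    Finset.card_image_of_injOn (fun a ha b hb h => by
      have := hbnd _ ha; have := hbnd _ hb; omega)]
  rw [leftPeakCount_eq]
  simp [Finset.card_singleton]
  omega

lemma two_mul_leftPeakCount_le (n : ℕ) (σ : Equiv.Perm (Fin n)) :
    2 * leftPeakCount n σ ≤ n := by
  have h := card_neutral n σ
  have hle := Finset.card_filter_le (Finset.range (n + 1)) (fun P =>
      P = n ∨ P ∈ pkSet n σ ∨ P + 1 ∈ pkSet n σ)
  rw [h, Finset.card_range] at hle
  omega

lemma card_creating (n : ℕ) (σ : Equiv.Perm (Fin n)) :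
    ((Finset.range (n + 1)).filter fun P =>
      ¬ (P = n ∨ P ∈ pkSet n σ ∨ P + 1 ∈ pkSet n σ)).card = n - 2 * leftPeakCount n σ := by
  classical
  have h := Finset.card_filter_add_card_filter_not (s := Finset.range (n + 1))
    (p := fun P => P = n ∨ P ∈ pkSet n σ ∨ P + 1 ∈ pkSet n σ)
  rw [card_neutral, Finset.card_range] at h
  have := two_mul_leftPeakCount_le n σ
  omega

lemma ins_injective {n : ℕ} :
    Function.Injective (fun sp : Equiv.Perm (Fin n) × Fin (n + 1) => ins sp.1 sp.2) := by
  rintro ⟨σ, p⟩ ⟨σ', p'⟩ h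
  simp only at h
  have hpp : p = p' := by
    have h1 : ins σ' p' p = Fin.last n := by rw [← h, ins_apply_self]
    have h2 : ins σ' p' p' = Fin.last n := ins_apply_self σ' p'
    exact (ins σ' p').injective (h1.trans h2.symm)
  subst hpp
  have hσ : σ = σ' := by
    ext j
    rcases lt_or_ge (j.castSucc) p with hc | hc
    · have e1 : ins σ p j.castSucc = (σ j).castSucc := ins_apply_lt σ p j hc
      have e2 : ins σ' p j.castSucc = (σ' j).castSucc := ins_apply_lt σ' p j hc
      rw [h] at e1
      have := e1.symm.trans e2
      exact congrArg Fin.val (Fin.castSucc_injective n this.symm) ▸ rfl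
    · have e1 : ins σ p j.succ = (σ j).castSucc := ins_apply_ge σ p j hc
      have e2 : ins σ' p j.succ = (σ' j).castSucc := ins_apply_ge σ' p j hc
      rw [h] at e1
      have := e1.symm.trans e2
      exact congrArg Fin.val (Fin.castSucc_injective n this.symm) ▸ rfl
  rw [hσ]

lemma ins_bijective {n : ℕ} :
    Function.Bijective (fun sp : Equiv.Perm (Fin n) × Fin (n + 1) => ins sp.1 sp.2) := by
  rw [Fintype.bijective_iff_injective_and_card]
  refine ⟨ins_injective, ?_⟩
  simp [Fintype.card_perm, Nat.factorial_succ, Nat.mul_comm]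

lemma sum_perm_succ {M : Type*} [AddCommMonoid M] {n : ℕ} (g : Equiv.Perm (Fin (n + 1)) → M) :
    ∑ τ : Equiv.Perm (Fin (n + 1)), g τ =
      ∑ σ : Equiv.Perm (Fin n), ∑ p : Fin (n + 1), g (ins σ p) := by
  have h := Fintype.sum_bijective _ (ins_bijective (n := n))
    (fun sp : Equiv.Perm (Fin n) × Fin (n + 1) => g (ins sp.1 sp.2)) g (fun sp => rfl)
  rw [← h, Fintype.sum_prod_type]

lemma Dterm (D : Derivation ℚ (MvPolynomial (Fin 2) ℚ) (MvPolynomial (Fin 2) ℚ))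
    (hx : D (X 0) = X 0 * X 1) (hy : D (X 1) = X 0 ^ 2) (L m : ℕ) :
    D (X 0 ^ (2 * L + 1) * X 1 ^ m) =
      (2 * L + 1) • (X 0 ^ (2 * L + 1) * X 1 ^ (m + 1)) +
      m • (X 0 ^ (2 * L + 3) * X 1 ^ (m - 1)) := by
  rw [Derivation.leibniz, Derivation.leibniz_pow, Derivation.leibniz_pow, hx, hy]
  rcases m with _ | m'
  · simp only [Nat.zero_sub, zero_smul, smul_zero, zero_add, pow_zero, zero_smul, add_zero,
      Nat.add_sub_cancel, smul_eq_mul, nsmul_eq_mul]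
    ring
  · simp only [Nat.add_sub_cancel, smul_eq_mul, nsmul_eq_mul]
    push_cast
    ring

lemma aux_main (D : Derivation ℚ (MvPolynomial (Fin 2) ℚ) (MvPolynomial (Fin 2) ℚ))
    (hx : D (X 0) = X 0 * X 1) (hy : D (X 1) = X 0 ^ 2) (n : ℕ) :
    (⇑D)^[n] (X 0) = ∑ σ : Equiv.Perm (Fin n),
      X 0 ^ (2 * leftPeakCount n σ + 1) * X 1 ^ (n - 2 * leftPeakCount n σ) := by
  induction n with
  | zero =>
    have hL : ∀ σ : Equiv.Perm (Fin 0), leftPeakCount 0 σ = 0 := by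
      intro σ
      rw [leftPeakCount]
      rfl
    simp only [Function.iterate_zero_apply, hL]
    rw [Finset.sum_const]
    simp [Fintype.card_perm]
  | succ n ih =>
    rw [Function.iterate_succ_apply', ih, map_sum]
    rw [sum_perm_succ (fun τ => X 0 ^ (2 * leftPeakCount (n+1) τ + 1) *
      X 1 ^ (n + 1 - 2 * leftPeakCount (n+1) τ))]
    apply Finset.sum_congr rfl
    intro σ _
    have hL : 2 * leftPeakCount n σ ≤ n := two_mul_leftPeakCount_le n σ
    set L := leftPeakCount n σ with hLdef
    -- RHS inner sum over p
    have hinner : ∀ p : Fin (n + 1),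
        X 0 ^ (2 * leftPeakCount (n+1) (ins σ p) + 1) *
          X 1 ^ (n + 1 - 2 * leftPeakCount (n+1) (ins σ p)) =
        if ((p : ℕ) = n ∨ (p : ℕ) ∈ pkSet n σ ∨ (p : ℕ) + 1 ∈ pkSet n σ)
          then (X 0 : MvPolynomial (Fin 2) ℚ) ^ (2 * L + 1) * X 1 ^ (n + 1 - 2 * L)
          else (X 0 : MvPolynomial (Fin 2) ℚ) ^ (2 * (L + 1) + 1) * X 1 ^ (n + 1 - 2 * (L + 1)) := by
      intro p
      rw [leftPeakCount_ins σ p]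
      split
      · simp [hLdef]
      · simp [hLdef]
    rw [Finset.sum_congr rfl (fun p _ => hinner p)]
    have hfin : ∑ p : Fin (n + 1),
        (if ((p : ℕ) = n ∨ (p : ℕ) ∈ pkSet n σ ∨ (p : ℕ) + 1 ∈ pkSet n σ)
          then (X 0 : MvPolynomial (Fin 2) ℚ) ^ (2 * L + 1) * X 1 ^ (n + 1 - 2 * L)
          else (X 0 : MvPolynomial (Fin 2) ℚ) ^ (2 * (L + 1) + 1) * X 1 ^ (n + 1 - 2 * (L + 1))) =
        ∑ P ∈ Finset.range (n + 1),
        (if (P = n ∨ P ∈ pkSet n σ ∨ P + 1 ∈ pkSet n σ)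
          then (X 0 : MvPolynomial (Fin 2) ℚ) ^ (2 * L + 1) * X 1 ^ (n + 1 - 2 * L)
          else (X 0 : MvPolynomial (Fin 2) ℚ) ^ (2 * (L + 1) + 1) * X 1 ^ (n + 1 - 2 * (L + 1))) :=
      Fin.sum_univ_eq_sum_range (fun P =>
        if (P = n ∨ P ∈ pkSet n σ ∨ P + 1 ∈ pkSet n σ)
          then (X 0 : MvPolynomial (Fin 2) ℚ) ^ (2 * L + 1) * X 1 ^ (n + 1 - 2 * L)
          else (X 0 : MvPolynomial (Fin 2) ℚ) ^ (2 * (L + 1) + 1) * X 1 ^ (n + 1 - 2 * (L + 1)))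
        (n + 1)
    rw [hfin, Finset.sum_ite, Finset.sum_const, Finset.sum_const,
      card_neutral n σ, card_creating n σ, ← hLdef]
    rw [Dterm D hx hy L (n - 2 * L)]
    rw [(show n - 2 * L + 1 = n + 1 - 2 * L by omega),
      (show 2 * L + 3 = 2 * (L + 1) + 1 by omega),
      (show n - 2 * L - 1 = n + 1 - 2 * (L + 1) by omega)]


/-- `Dⁿ(x) = Σ_{k=0}^{⌊n/2⌋} L(n,k)·x^{2k+1}·y^{n−2k}`. -/
theorem stmt_2 (D : Derivation ℚ (MvPolynomial (Fin 2) ℚ) (MvPolynomial (Fin 2) ℚ))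
    (hx : D (X 0) = X 0 * X 1) (hy : D (X 1) = X 0 ^ 2) (n : ℕ) :
    (⇑D)^[n] (X 0) = ∑ k ∈ Finset.range (n / 2 + 1),
      (leftPeakNum n k : MvPolynomial (Fin 2) ℚ) * X 0 ^ (2 * k + 1) * X 1 ^ (n - 2 * k) := by
  classical
  rw [aux_main D hx hy n]
  have hmap : ∀ σ ∈ (Finset.univ : Finset (Equiv.Perm (Fin n))),
      leftPeakCount n σ ∈ Finset.range (n / 2 + 1) := by
    intro σ _
    have := two_mul_leftPeakCount_le n σ
    rw [Finset.mem_range]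
    omega
  rw [← Finset.sum_fiberwise_of_maps_to hmap (fun σ =>
    (X 0 : MvPolynomial (Fin 2) ℚ) ^ (2 * leftPeakCount n σ + 1) *
      X 1 ^ (n - 2 * leftPeakCount n σ))]
  apply Finset.sum_congr rfl
  intro k _
  have hinner : ∀ σ ∈ Finset.univ.filter
      (fun σ : Equiv.Perm (Fin n) => leftPeakCount n σ = k),
      (X 0 : MvPolynomial (Fin 2) ℚ) ^ (2 * leftPeakCount n σ + 1) *
        X 1 ^ (n - 2 * leftPeakCount n σ) = X 0 ^ (2 * k + 1) * X 1 ^ (n - 2 * k) := by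
    intro σ hσ
    rw [(Finset.mem_filter.1 hσ).2]
  rw [Finset.sum_congr rfl hinner, Finset.sum_const]
  rw [leftPeakNum, nsmul_eq_mul, mul_assoc]
end

section
/- Let D be the unique derivation of the polynomial ring ℚ[x,y] determined by D(x) = x·y and D(y) = x². Then for every n ≥ 0, Dⁿ(y) = Σ_{k≥0} W(n,k)·x^{2k}·y^{n−2k+1}, where W(n,k) is the number of permutations of [n] with exactly k exterior peaks (the n = 0 term being y). Moreover, for every n ≥ 1, Dⁿ(y) = Σ_{k=0}^{⌊(n−1)/2⌋} M(n,k)·x^{2k+2}·y^{n−2k−1}, where M(n,k) is the number of permutations of [n] with exactly k interior peaks. -/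
open MvPolynomial

namespace Stmt3Aux


open Finset Equiv

variable {n : ℕ}

def pk (n : ℕ) (σ : Equiv.Perm (Fin n)) (i : ℕ) : Prop :=
  permEntry n σ (i - 1) < permEntry n σ i ∧ permEntry n σ (i + 1) < permEntry n σ i

instance (σ : Equiv.Perm (Fin n)) : DecidablePred (pk n σ) := fun _ => instDecidableAnd

lemma permEntry_le (σ : Equiv.Perm (Fin n)) (i : ℕ) : permEntry n σ i ≤ n := by
  unfold permEntry
  split
  · exact Nat.succ_le_of_lt (Fin.is_lt _)
  · omega

lemma permEntry_val (σ : Equiv.Perm (Fin n)) (q : Fin n) :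
    permEntry n σ ((q : ℕ) + 1) = (σ q : ℕ) + 1 := by
  have h : 1 ≤ (q : ℕ) + 1 ∧ (q : ℕ) + 1 ≤ n := ⟨Nat.le_add_left _ _, q.is_lt⟩
  rw [permEntry, dif_pos h]
  have e : (⟨(q : ℕ) + 1 - 1, by omega⟩ : Fin n) = q := Fin.ext (by simp)
  rw [e]

def ins (τ : Equiv.Perm (Fin n)) (j : Fin (n + 1)) : Equiv.Perm (Fin (n + 1)) :=
  ((finSuccEquiv' j).trans τ.optionCongr).trans (finSuccEquiv' (Fin.last n)).symm

lemma ins_apply_self (τ : Equiv.Perm (Fin n)) (j : Fin (n + 1)) :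
    ins τ j j = Fin.last n := by
  simp [ins, finSuccEquiv'_at]

lemma ins_apply_lt (τ : Equiv.Perm (Fin n)) (j : Fin (n + 1)) (q : Fin n)
    (h : Fin.castSucc q < j) : ins τ j q.castSucc = (τ q).castSucc := by
  simp [ins, finSuccEquiv'_below h, finSuccEquiv'_symm_some, Fin.succAbove_last]

lemma ins_apply_ge (τ : Equiv.Perm (Fin n)) (j : Fin (n + 1)) (q : Fin n)
    (h : j ≤ Fin.castSucc q) : ins τ j q.succ = (τ q).castSucc := by
  simp [ins, finSuccEquiv'_above h, finSuccEquiv'_symm_some, Fin.succAbove_last]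

lemma entry_ins (τ : Equiv.Perm (Fin n)) (j : Fin (n + 1)) (i : ℕ) :
    permEntry (n + 1) (ins τ j) i =
      if i = (j : ℕ) + 1 then n + 1
      else if i ≤ (j : ℕ) then permEntry n τ i else permEntry n τ (i - 1) := by
  have hj : (j : ℕ) ≤ n := Nat.lt_succ_iff.mp j.is_lt
  by_cases hi : 1 ≤ i ∧ i ≤ n + 1
  swap
  · -- out of range: i = 0 or i ≥ n + 2
    rw [permEntry, dif_neg hi]
    rcases Nat.eq_zero_or_pos i with h0 | h0
    · subst h0
      rw [if_neg (by omega), if_pos (by omega), permEntry, dif_neg (by omega)]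
    · rw [if_neg (by omega), if_neg (by omega), permEntry, dif_neg (by omega)]
  · rw [permEntry, dif_pos hi]
    by_cases h1 : i = (j : ℕ) + 1
    · rw [if_pos h1]
      have : (⟨i - 1, by omega⟩ : Fin (n + 1)) = j := Fin.ext (show i - 1 = (j : ℕ) by omega)
      rw [this, ins_apply_self]
      simp [Fin.last]
    · rw [if_neg h1]
      by_cases h2 : i ≤ (j : ℕ)
      · rw [if_pos h2]
        have hq : i - 1 < n := by omega
        have : (⟨i - 1, by omega⟩ : Fin (n + 1)) = (Fin.castSucc ⟨i - 1, hq⟩) :=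
          Fin.ext rfl
        rw [this, ins_apply_lt τ j _ (by simp [Fin.lt_def]; omega)]
        rw [permEntry, dif_pos ⟨hi.1, by omega⟩]
        simp
      · rw [if_neg h2]
        have hq : i - 2 < n := by omega
        have : (⟨i - 1, by omega⟩ : Fin (n + 1)) = (Fin.succ ⟨i - 2, hq⟩) :=
          Fin.ext (show i - 1 = (i - 2) + 1 by omega)
        rw [this, ins_apply_ge τ j _ (by simp [Fin.le_def]; omega)]
        rw [permEntry, dif_pos (show 1 ≤ i - 1 ∧ i - 1 ≤ n by constructor <;> omega)]
        have e2 : (⟨i - 1 - 1, by omega⟩ : Fin n) = (⟨i - 2, hq⟩ : Fin n) :=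
          Fin.ext (show i - 1 - 1 = i - 2 by omega)
        rw [e2]
        simp

end Stmt3Aux

namespace Stmt3Aux

open Finset Equiv

variable {n : ℕ}

lemma pk_ins_self (τ : Equiv.Perm (Fin n)) (j : Fin (n + 1)) :
    pk (n + 1) (ins τ j) ((j : ℕ) + 1) := by
  have h1 := permEntry_le τ (j : ℕ)
  have h2 := permEntry_le τ ((j : ℕ) + 1)
  have e0 : permEntry (n + 1) (ins τ j) ((j : ℕ) + 1 - 1) = permEntry n τ (j : ℕ) := by
    rw [show (j : ℕ) + 1 - 1 = (j : ℕ) by omega, entry_ins, if_neg (by omega),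
      if_pos (by omega)]
  have e1 : permEntry (n + 1) (ins τ j) ((j : ℕ) + 1) = n + 1 := by
    rw [entry_ins, if_pos rfl]
  have e2 : permEntry (n + 1) (ins τ j) ((j : ℕ) + 1 + 1) = permEntry n τ ((j : ℕ) + 1) := by
    rw [entry_ins, if_neg (by omega), if_neg (by omega)]
    congr 1
  exact ⟨by omega, by omega⟩

lemma pk_ins_shift (τ : Equiv.Perm (Fin n)) (j : Fin (n + 1)) (i : ℕ)
    (hi1 : 1 ≤ i) (hi2 : i ≤ n) :
    pk (n + 1) (ins τ j) (if i ≤ (j : ℕ) then i else i + 1) ↔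
      (pk n τ i ∧ ¬(i = (j : ℕ) ∨ i = (j : ℕ) + 1)) := by
  have hj : (j : ℕ) ≤ n := Nat.lt_succ_iff.mp j.is_lt
  have b0 := permEntry_le τ (i - 1)
  have b1 := permEntry_le τ i
  have b2 := permEntry_le τ (i + 1)
  by_cases hA : i < (j : ℕ)
  · rw [if_pos (by omega)]
    have e0 : permEntry (n + 1) (ins τ j) (i - 1) = permEntry n τ (i - 1) := by
      rw [entry_ins, if_neg (by omega), if_pos (by omega)]
    have e1 : permEntry (n + 1) (ins τ j) i = permEntry n τ i := by
      rw [entry_ins, if_neg (by omega), if_pos (by omega)]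
    have e2 : permEntry (n + 1) (ins τ j) (i + 1) = permEntry n τ (i + 1) := by
      rw [entry_ins, if_neg (by omega), if_pos (by omega)]
    simp only [pk, e0, e1, e2]
    omega
  · by_cases hB : i = (j : ℕ)
    · rw [if_pos (by omega)]
      have e1 : permEntry (n + 1) (ins τ j) i = permEntry n τ i := by
        rw [entry_ins, if_neg (by omega), if_pos (by omega)]
      have e2 : permEntry (n + 1) (ins τ j) (i + 1) = n + 1 := by
        rw [entry_ins, if_pos (by omega)]
      simp only [pk, e1, e2]
      omega
    · by_cases hC : i = (j : ℕ) + 1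
      · rw [if_neg (by omega)]
        have e0 : permEntry (n + 1) (ins τ j) (i + 1 - 1) = n + 1 := by
          rw [entry_ins, if_pos (by omega)]
        have e1 : permEntry (n + 1) (ins τ j) (i + 1) = permEntry n τ i := by
          rw [entry_ins, if_neg (by omega), if_neg (by omega)]
          congr 1
        simp only [pk, e0, e1]
        omega
      · -- i ≥ j + 2
        rw [if_neg (by omega)]
        have e0 : permEntry (n + 1) (ins τ j) (i + 1 - 1) = permEntry n τ (i - 1) := by
          rw [entry_ins, if_neg (by omega), if_neg (by omega)]
          congr 1
        have e1 : permEntry (n + 1) (ins τ j) (i + 1) = permEntry n τ i := by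
          rw [entry_ins, if_neg (by omega), if_neg (by omega)]
          congr 1
        have e2 : permEntry (n + 1) (ins τ j) (i + 1 + 1) = permEntry n τ (i + 1) := by
          rw [entry_ins, if_neg (by omega), if_neg (by omega)]
          congr 1
        simp only [pk, e0, e1, e2]
        omega

end Stmt3Aux

namespace Stmt3Aux

open Finset Equiv

variable {n : ℕ}

/-- The set of exterior peak positions. -/
def peaks (n : ℕ) (σ : Equiv.Perm (Fin n)) : Finset ℕ := (Finset.Icc 1 n).filter (pk n σ)

/-- The set of interior peak positions. -/
def ipeaks (n : ℕ) (σ : Equiv.Perm (Fin n)) : Finset ℕ :=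
  (Finset.Icc 2 (n - 1)).filter (pk n σ)

lemma pk_not_adjacent (σ : Equiv.Perm (Fin n)) (i : ℕ) (h1 : pk n σ i) (h2 : pk n σ (i + 1)) :
    False := by
  have := h1.2
  have := h2.1
  simp only [Nat.add_sub_cancel] at this
  omega

lemma peaks_nonadj (σ : Equiv.Perm (Fin n)) (i : ℕ) (h : i ∈ peaks n σ) :
    i + 1 ∉ peaks n σ := by
  intro h'
  exact pk_not_adjacent σ i (Finset.mem_filter.mp h).2 (Finset.mem_filter.mp h').2

lemma ipeaks_nonadj (σ : Equiv.Perm (Fin n)) (i : ℕ) (h : i ∈ ipeaks n σ) :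
    i + 1 ∉ ipeaks n σ := by
  intro h'
  exact pk_not_adjacent σ i (Finset.mem_filter.mp h).2 (Finset.mem_filter.mp h').2

/-- Decomposition of a filtered count over `Icc 1 (n+1)` according to the
insertion position. -/
lemma card_filter_Icc_succ (P : ℕ → Prop) [DecidablePred P] (J : ℕ) (hJ : J ≤ n) :
    ((Finset.Icc 1 (n + 1)).filter P).card =
      (if P (J + 1) then 1 else 0) +
        ((Finset.Icc 1 n).filter fun i => P (if i ≤ J then i else i + 1)).card := by
  classical
  set f : ℕ → ℕ := fun i => if i ≤ J then i else i + 1 with hf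
  have hinj : Function.Injective f := by
    intro a b hab
    simp only [hf] at hab
    split_ifs at hab <;> omega
  have himg : Finset.Icc 1 (n + 1) = insert (J + 1) ((Finset.Icc 1 n).image f) := by
    ext x
    simp only [Finset.mem_Icc, Finset.mem_insert, Finset.mem_image]
    constructor
    · rintro ⟨hx1, hx2⟩
      by_cases hx : x = J + 1
      · exact Or.inl hx
      · right
        rcases le_or_gt x J with h | h
        · exact ⟨x, ⟨hx1, by omega⟩, by simp [hf, h]⟩
        · refine ⟨x - 1, ⟨by omega, by omega⟩, ?_⟩
          simp only [hf, if_neg (show ¬ x - 1 ≤ J by omega)]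
          omega
    · rintro (rfl | ⟨a, ⟨ha1, ha2⟩, rfl⟩)
      · omega
      · simp only [hf]
        split_ifs <;> omega
  have hnot : (J + 1) ∉ (Finset.Icc 1 n).image f := by
    intro hmem
    rcases Finset.mem_image.mp hmem with ⟨a, ha, hfa⟩
    simp only [hf] at hfa
    rcases Finset.mem_Icc.mp ha with ⟨ha1, ha2⟩
    split_ifs at hfa <;> omega
  rw [himg, Finset.filter_insert]
  have himgcard : ((Finset.Icc 1 n).image f).filter P =
      ((Finset.Icc 1 n).filter fun i => P (f i)).image f := by
    rw [Finset.filter_image]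
  have hcard2 : (((Finset.Icc 1 n).image f).filter P).card =
      ((Finset.Icc 1 n).filter fun i => P (f i)).card := by
    rw [himgcard, Finset.card_image_of_injective _ hinj]
  split_ifs with hP
  · rw [Finset.card_insert_of_notMem (fun hmem => hnot (Finset.mem_filter.mp hmem).1), hcard2]
    simp only [hf]
    omega
  · rw [hcard2]
    simp only [hf]
    omega

lemma card_pair_filter (S : Finset ℕ) (J : ℕ) (hadj : ¬(J ∈ S ∧ J + 1 ∈ S)) :
    (S.filter fun i => i = J ∨ i = J + 1).card =
      if J ∈ S ∨ J + 1 ∈ S then 1 else 0 := by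
  classical
  rw [Finset.filter_or, Finset.filter_eq', Finset.filter_eq']
  by_cases h1 : J ∈ S <;> by_cases h2 : J + 1 ∈ S <;>
    simp [h1, h2] <;> tauto

end Stmt3Aux

namespace Stmt3Aux

open Finset Equiv

variable {n : ℕ}

lemma extPeakCount_eq (σ : Equiv.Perm (Fin n)) : extPeakCount n σ = (peaks n σ).card := rfl

lemma intPeakCount_eq (σ : Equiv.Perm (Fin n)) : intPeakCount n σ = (ipeaks n σ).card := rfl

lemma ext_count_ins (τ : Equiv.Perm (Fin n)) (j : Fin (n + 1)) :
    extPeakCount (n + 1) (ins τ j) +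
        (if (j : ℕ) ∈ peaks n τ ∨ (j : ℕ) + 1 ∈ peaks n τ then 1 else 0) =
      extPeakCount n τ + 1 := by
  classical
  have hj : (j : ℕ) ≤ n := Nat.lt_succ_iff.mp j.is_lt
  have h1 : extPeakCount (n + 1) (ins τ j) =
      ((Finset.Icc 1 (n + 1)).filter (pk (n + 1) (ins τ j))).card := rfl
  rw [h1, card_filter_Icc_succ (pk (n + 1) (ins τ j)) (j : ℕ) hj,
    if_pos (pk_ins_self τ j)]
  have h2 : ((Finset.Icc 1 n).filter fun i =>
        pk (n + 1) (ins τ j) (if i ≤ (j : ℕ) then i else i + 1)) =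
      (Finset.Icc 1 n).filter (fun i =>
        pk n τ i ∧ ¬(i = (j : ℕ) ∨ i = (j : ℕ) + 1)) := by
    apply Finset.filter_congr
    intro i hi
    rcases Finset.mem_Icc.mp hi with ⟨hi1, hi2⟩
    exact pk_ins_shift τ j i hi1 hi2
  rw [h2]
  have h3 := Finset.card_filter_add_card_filter_not
      (s := peaks n τ) (p := fun i => i = (j : ℕ) ∨ i = (j : ℕ) + 1)
  have h4 := card_pair_filter (peaks n τ) (j : ℕ)
      (fun h => peaks_nonadj τ _ h.1 h.2)
  have h5 : (Finset.Icc 1 n).filter (fun i =>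
        pk n τ i ∧ ¬(i = (j : ℕ) ∨ i = (j : ℕ) + 1)) =
      (peaks n τ).filter (fun i => ¬(i = (j : ℕ) ∨ i = (j : ℕ) + 1)) := by
    rw [peaks, Finset.filter_filter]
  rw [h5, extPeakCount_eq]
  rw [h4] at h3
  split_ifs at h3 ⊢ <;> omega

lemma int_count_ins (τ : Equiv.Perm (Fin n)) (j : Fin (n + 1)) :
    intPeakCount (n + 1) (ins τ j) +
        (if ((j : ℕ) = 0 ∨ (j : ℕ) = n) ∨
            ((j : ℕ) ∈ ipeaks n τ ∨ (j : ℕ) + 1 ∈ ipeaks n τ) then 1 else 0) =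
      intPeakCount n τ + 1 := by
  classical
  have hj : (j : ℕ) ≤ n := Nat.lt_succ_iff.mp j.is_lt
  set Q : ℕ → Prop := fun i => pk (n + 1) (ins τ j) i ∧ 2 ≤ i ∧ i ≤ n with hQ
  have h0 : intPeakCount (n + 1) (ins τ j) = ((Finset.Icc 1 (n + 1)).filter Q).card := by
    have ha : intPeakCount (n + 1) (ins τ j) =
        ((Finset.Icc 2 (n + 1 - 1)).filter (pk (n + 1) (ins τ j))).card := rfl
    rw [ha]
    congr 1
    ext i
    simp only [Finset.mem_filter, Finset.mem_Icc, hQ]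
    constructor
    · rintro ⟨⟨a, b⟩, c⟩
      exact ⟨⟨by omega, by omega⟩, c, by omega, by omega⟩
    · rintro ⟨_, c, a, b⟩
      exact ⟨⟨a, by omega⟩, c⟩
  rw [h0, card_filter_Icc_succ Q (j : ℕ) hj]
  have hQself : (if Q ((j : ℕ) + 1) then 1 else 0) =
      if (j : ℕ) = 0 ∨ (j : ℕ) = n then 0 else 1 := by
    have hself := pk_ins_self τ j
    by_cases hb : (j : ℕ) = 0 ∨ (j : ℕ) = n
    · rw [if_pos hb, if_neg]
      simp only [hQ]
      rintro ⟨-, h2, h3⟩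
      omega
    · rw [if_neg hb, if_pos]
      simp only [hQ]
      exact ⟨hself, by omega, by omega⟩
  rw [hQself]
  have h2 : ((Finset.Icc 1 n).filter fun i => Q (if i ≤ (j : ℕ) then i else i + 1)) =
      (ipeaks n τ).filter (fun i => ¬(i = (j : ℕ) ∨ i = (j : ℕ) + 1)) := by
    ext i
    simp only [Finset.mem_filter, Finset.mem_Icc, hQ, ipeaks]
    constructor
    · rintro ⟨⟨hi1, hi2⟩, hpk', hb1, hb2⟩
      obtain ⟨hpk, hne⟩ := (pk_ins_shift τ j i hi1 hi2).mp hpk'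
      by_cases hle : i ≤ (j : ℕ)
      · rw [if_pos hle] at hb1 hb2
        exact ⟨⟨⟨by omega, by omega⟩, hpk⟩, by omega⟩
      · rw [if_neg hle] at hb1 hb2
        exact ⟨⟨⟨by omega, by omega⟩, hpk⟩, by omega⟩
    · rintro ⟨⟨⟨hi1, hi2⟩, hpk⟩, hne⟩
      have hb : 1 ≤ i ∧ i ≤ n := ⟨by omega, by omega⟩
      refine ⟨⟨hb.1, hb.2⟩, (pk_ins_shift τ j i hb.1 hb.2).mpr ⟨hpk, by omega⟩, ?_, ?_⟩ <;>
        · by_cases hle : i ≤ (j : ℕ)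
          · rw [if_pos hle]; omega
          · rw [if_neg hle]; omega
  rw [h2]
  have h3 := Finset.card_filter_add_card_filter_not
      (s := ipeaks n τ) (p := fun i => i = (j : ℕ) ∨ i = (j : ℕ) + 1)
  have h4 := card_pair_filter (ipeaks n τ) (j : ℕ)
      (fun h => ipeaks_nonadj τ _ h.1 h.2)
  rw [h4] at h3
  rw [intPeakCount_eq]
  have hJb : (j : ℕ) ∈ ipeaks n τ → 2 ≤ (j : ℕ) ∧ (j : ℕ) ≤ n - 1 := fun h =>
    Finset.mem_Icc.mp (Finset.mem_filter.mp h).1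
  have hJb1 : (j : ℕ) + 1 ∈ ipeaks n τ → 2 ≤ (j : ℕ) + 1 ∧ (j : ℕ) + 1 ≤ n - 1 := fun h =>
    Finset.mem_Icc.mp (Finset.mem_filter.mp h).1
  by_cases hA : (j : ℕ) = 0 ∨ (j : ℕ) = n
  · have hB1 : (j : ℕ) ∉ ipeaks n τ := fun h => by have := hJb h; omega
    have hB2 : (j : ℕ) + 1 ∉ ipeaks n τ := fun h => by have := hJb1 h; omega
    rw [if_pos hA, if_pos (Or.inl hA)]
    rw [if_neg (by tauto)] at h3
    omega
  · rw [if_neg hA]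
    by_cases hB : (j : ℕ) ∈ ipeaks n τ ∨ (j : ℕ) + 1 ∈ ipeaks n τ
    · rw [if_pos (Or.inr hB)]
      rw [if_pos hB] at h3
      omega
    · rw [if_neg (by tauto)]
      rw [if_neg hB] at h3
      omega

lemma card_union_shift (S : Finset ℕ) (h1 : ∀ i ∈ S, 1 ≤ i) (hadj : ∀ i ∈ S, i + 1 ∉ S) :
    (S ∪ S.image (· - 1)).card = 2 * S.card := by
  classical
  have hdisj : Disjoint S (S.image (· - 1)) := by
    rw [Finset.disjoint_left]
    intro x hx hx'
    rcases Finset.mem_image.mp hx' with ⟨a, ha, hfa⟩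
    have : a = x + 1 := by have := h1 a ha; omega
    exact hadj x hx (this ▸ ha)
  rw [Finset.card_union_of_disjoint hdisj,
    Finset.card_image_of_injOn (fun a ha b hb hab => by
      have := h1 a ha; have := h1 b hb; omega)]
  omega

lemma mem_image_sub_one (S : Finset ℕ) (h1 : ∀ i ∈ S, 1 ≤ i) (J : ℕ) :
    J ∈ S.image (· - 1) ↔ J + 1 ∈ S := by
  constructor
  · rintro h
    rcases Finset.mem_image.mp h with ⟨a, ha, hfa⟩
    have : a = J + 1 := by have := h1 a ha; omega
    exact this ▸ ha
  · intro h
    exact Finset.mem_image.mpr ⟨J + 1, h, rfl⟩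

lemma peaks_mem_one_le (σ : Equiv.Perm (Fin n)) : ∀ i ∈ peaks n σ, 1 ≤ i := fun i hi =>
  (Finset.mem_Icc.mp (Finset.mem_filter.mp hi).1).1

lemma ipeaks_mem_le (σ : Equiv.Perm (Fin n)) :
    ∀ i ∈ ipeaks n σ, 2 ≤ i ∧ i ≤ n - 1 := fun i hi =>
  Finset.mem_Icc.mp (Finset.mem_filter.mp hi).1

lemma ext_bound (σ : Equiv.Perm (Fin n)) : 2 * extPeakCount n σ ≤ n + 1 := by
  classical
  have hcard := card_union_shift (peaks n σ) (peaks_mem_one_le σ) (peaks_nonadj σ)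
  have hsub : peaks n σ ∪ (peaks n σ).image (· - 1) ⊆ Finset.range (n + 1) := by
    intro x hx
    rcases Finset.mem_union.mp hx with h | h
    · have := Finset.mem_Icc.mp (Finset.mem_filter.mp h).1
      exact Finset.mem_range.mpr (by omega)
    · rcases Finset.mem_image.mp h with ⟨a, ha, hfa⟩
      have := Finset.mem_Icc.mp (Finset.mem_filter.mp ha).1
      exact Finset.mem_range.mpr (by omega)
  have hle := Finset.card_le_card hsub
  rw [hcard, Finset.card_range] at hle
  rw [extPeakCount_eq]
  omega
  
lemma int_bound (σ : Equiv.Perm (Fin n)) : 2 * intPeakCount n σ ≤ n - 1 := by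
  classical
  have hcard := card_union_shift (ipeaks n σ)
    (fun i hi => by have := ipeaks_mem_le σ i hi; omega) (ipeaks_nonadj σ)
  have hsub : ipeaks n σ ∪ (ipeaks n σ).image (· - 1) ⊆ Finset.Icc 1 (n - 1) := by
    intro x hx
    rcases Finset.mem_union.mp hx with h | h
    · have := ipeaks_mem_le σ x h
      exact Finset.mem_Icc.mpr (by omega)
    · rcases Finset.mem_image.mp h with ⟨a, ha, hfa⟩
      have := ipeaks_mem_le σ a ha
      exact Finset.mem_Icc.mpr (by omega)
  have hle := Finset.card_le_card hsub
  rw [hcard, Nat.card_Icc] at hle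
  rw [intPeakCount_eq]
  omega

lemma peaks_bad_sub (τ : Equiv.Perm (Fin n)) :
    peaks n τ ∪ (peaks n τ).image (· - 1) ⊆ Finset.range (n + 1) := by
  intro x hx
  rcases Finset.mem_union.mp hx with h | h
  · have := Finset.mem_Icc.mp (Finset.mem_filter.mp h).1
    exact Finset.mem_range.mpr (by omega)
  · rcases Finset.mem_image.mp h with ⟨a, ha, hfa⟩
    have := Finset.mem_Icc.mp (Finset.mem_filter.mp ha).1
    exact Finset.mem_range.mpr (by omega)

lemma sum_ins_ext {M : Type*} [AddCommMonoid M] (τ : Equiv.Perm (Fin n)) (f : ℕ → M) :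
    ∑ j : Fin (n + 1), f (extPeakCount (n + 1) (ins τ j)) =
      (2 * extPeakCount n τ) • f (extPeakCount n τ) +
        (n + 1 - 2 * extPeakCount n τ) • f (extPeakCount n τ + 1) := by
  classical
  set Bad := peaks n τ ∪ (peaks n τ).image (· - 1) with hBad
  have hmem : ∀ J : ℕ, J ∈ Bad ↔ (J ∈ peaks n τ ∨ J + 1 ∈ peaks n τ) := by
    intro J
    rw [hBad, Finset.mem_union, mem_image_sub_one _ (peaks_mem_one_le τ)]
  have hcount : ∀ j : Fin (n + 1), extPeakCount (n + 1) (ins τ j) =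
      if (j : ℕ) ∈ Bad then extPeakCount n τ else extPeakCount n τ + 1 := by
    intro j
    have hc := ext_count_ins τ j
    by_cases hb : (j : ℕ) ∈ Bad
    · rw [if_pos hb]
      rw [if_pos ((hmem _).mp hb)] at hc
      omega
    · rw [if_neg hb]
      rw [if_neg (fun hc' => hb ((hmem _).mpr hc'))] at hc
      omega
  have hcard : Bad.card = 2 * extPeakCount n τ := by
    rw [hBad, card_union_shift _ (peaks_mem_one_le τ) (peaks_nonadj τ), extPeakCount_eq]
  have hsub := peaks_bad_sub τ
  calc ∑ j : Fin (n + 1), f (extPeakCount (n + 1) (ins τ j))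
      = ∑ j : Fin (n + 1), (if (j : ℕ) ∈ Bad then f (extPeakCount n τ)
          else f (extPeakCount n τ + 1)) := by
        refine Finset.sum_congr rfl fun j _ => ?_
        rw [hcount j]
        split_ifs <;> rfl
    _ = ∑ J ∈ Finset.range (n + 1), (if J ∈ Bad then f (extPeakCount n τ)
          else f (extPeakCount n τ + 1)) :=
        Fin.sum_univ_eq_sum_range
          (fun J => if J ∈ Bad then f (extPeakCount n τ) else f (extPeakCount n τ + 1)) (n + 1)
    _ = _ := by
        rw [Finset.sum_ite, Finset.sum_const, Finset.sum_const]
        rw [Finset.filter_mem_eq_inter, Finset.inter_eq_right.mpr hsub]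
        have hnotf : Finset.filter (fun J => J ∉ Bad) (Finset.range (n + 1)) =
            Finset.range (n + 1) \ Bad := by
          ext x
          simp [Finset.mem_sdiff, Finset.mem_filter]
        rw [hnotf, Finset.card_sdiff_of_subset hsub, Finset.card_range, hcard]

lemma sum_ins_int {M : Type*} [AddCommMonoid M] (hn : 1 ≤ n) (τ : Equiv.Perm (Fin n))
    (f : ℕ → M) :
    ∑ j : Fin (n + 1), f (intPeakCount (n + 1) (ins τ j)) =
      (2 * intPeakCount n τ + 2) • f (intPeakCount n τ) +
        (n - 1 - 2 * intPeakCount n τ) • f (intPeakCount n τ + 1) := by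
  classical
  set U := ipeaks n τ ∪ (ipeaks n τ).image (· - 1) with hU
  set Bad := insert 0 (insert n U) with hBad
  have hUb : ∀ x ∈ U, 1 ≤ x ∧ x ≤ n - 1 := by
    intro x hx
    rcases Finset.mem_union.mp hx with h | h
    · have := ipeaks_mem_le τ x h
      omega
    · rcases Finset.mem_image.mp h with ⟨a, ha, hfa⟩
      have := ipeaks_mem_le τ a ha
      omega
  have hmem : ∀ J : ℕ, J ∈ Bad ↔
      (J = 0 ∨ J = n) ∨ (J ∈ ipeaks n τ ∨ J + 1 ∈ ipeaks n τ) := by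
    intro J
    rw [hBad, Finset.mem_insert, Finset.mem_insert, hU, Finset.mem_union,
      mem_image_sub_one _ (fun i hi => by have := ipeaks_mem_le τ i hi; omega)]
    tauto
  have hcount : ∀ j : Fin (n + 1), intPeakCount (n + 1) (ins τ j) =
      if (j : ℕ) ∈ Bad then intPeakCount n τ else intPeakCount n τ + 1 := by
    intro j
    have hc := int_count_ins τ j
    by_cases hb : (j : ℕ) ∈ Bad
    · rw [if_pos hb]
      rw [if_pos ((hmem _).mp hb)] at hc
      omega
    · rw [if_neg hb]
      rw [if_neg (fun hc' => hb ((hmem _).mpr hc'))] at hc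
      omega
  have hUcard : U.card = 2 * intPeakCount n τ := by
    rw [hU, card_union_shift _ (fun i hi => by have := ipeaks_mem_le τ i hi; omega)
      (ipeaks_nonadj τ), intPeakCount_eq]
  have hn0 : (0 : ℕ) ∉ insert n U := by
    simp only [Finset.mem_insert]
    rintro (h | h)
    · omega
    · have := hUb 0 h; omega
  have hnn : n ∉ U := fun h => by have := hUb n h; omega
  have hcard : Bad.card = 2 * intPeakCount n τ + 2 := by
    rw [hBad, Finset.card_insert_of_notMem hn0, Finset.card_insert_of_notMem hnn, hUcard]
  have hsub : Bad ⊆ Finset.range (n + 1) := by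
    intro x hx
    rw [hBad] at hx
    simp only [Finset.mem_insert] at hx
    rcases hx with rfl | rfl | h
    · exact Finset.mem_range.mpr (by omega)
    · exact Finset.mem_range.mpr (by omega)
    · have := hUb x h
      exact Finset.mem_range.mpr (by omega)
  calc ∑ j : Fin (n + 1), f (intPeakCount (n + 1) (ins τ j))
      = ∑ j : Fin (n + 1), (if (j : ℕ) ∈ Bad then f (intPeakCount n τ)
          else f (intPeakCount n τ + 1)) := by
        refine Finset.sum_congr rfl fun j _ => ?_
        rw [hcount j]
        split_ifs <;> rfl
    _ = ∑ J ∈ Finset.range (n + 1), (if J ∈ Bad then f (intPeakCount n τ)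
          else f (intPeakCount n τ + 1)) :=
        Fin.sum_univ_eq_sum_range
          (fun J => if J ∈ Bad then f (intPeakCount n τ) else f (intPeakCount n τ + 1)) (n + 1)
    _ = _ := by
        rw [Finset.sum_ite, Finset.sum_const, Finset.sum_const]
        rw [Finset.filter_mem_eq_inter, Finset.inter_eq_right.mpr hsub]
        have hnotf : Finset.filter (fun J => J ∉ Bad) (Finset.range (n + 1)) =
            Finset.range (n + 1) \ Bad := by
          ext x
          simp [Finset.mem_sdiff, Finset.mem_filter]
        rw [hnotf, Finset.card_sdiff_of_subset hsub, Finset.card_range, hcard]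
        have hb := int_bound τ
        congr 1
        congr 1
        omega

lemma ins_injective :
    Function.Injective (fun p : Equiv.Perm (Fin n) × Fin (n + 1) => ins p.1 p.2) := by
  rintro ⟨τ, j⟩ ⟨τ', j'⟩ h
  simp only at h
  have hj : j = j' := by
    by_contra hne
    have hval : (j : ℕ) ≠ (j' : ℕ) := fun hv => hne (Fin.ext hv)
    have h1 : permEntry (n + 1) (ins τ j) ((j : ℕ) + 1) = n + 1 := by
      rw [entry_ins, if_pos rfl]
    have h2 : permEntry (n + 1) (ins τ' j') ((j : ℕ) + 1) ≤ n := by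
      rw [entry_ins, if_neg (by omega)]
      split_ifs
      · exact permEntry_le τ' _
      · exact permEntry_le τ' _
    rw [h] at h1
    omega
  subst hj
  have key : ∀ i, permEntry n τ i = permEntry n τ' i := by
    intro i
    by_cases hr : 1 ≤ i ∧ i ≤ n
    · by_cases hle : i ≤ (j : ℕ)
      · have e1 : permEntry (n + 1) (ins τ j) i = permEntry n τ i := by
          rw [entry_ins, if_neg (by omega), if_pos hle]
        have e2 : permEntry (n + 1) (ins τ' j) i = permEntry n τ' i := by
          rw [entry_ins, if_neg (by omega), if_pos hle]
        rw [← e1, ← e2, h]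
      · have e1 : permEntry (n + 1) (ins τ j) (i + 1) = permEntry n τ i := by
          rw [entry_ins, if_neg (by omega), if_neg (by omega)]
          congr 1
        have e2 : permEntry (n + 1) (ins τ' j) (i + 1) = permEntry n τ' i := by
          rw [entry_ins, if_neg (by omega), if_neg (by omega)]
          congr 1
        rw [← e1, ← e2, h]
    · rw [permEntry, dif_neg hr, permEntry, dif_neg hr]
  have hτ : τ = τ' := by
    apply Equiv.ext
    intro q
    have hk := key ((q : ℕ) + 1)
    rw [permEntry_val, permEntry_val] at hk
    exact Fin.ext (by omega)
  rw [hτ]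

lemma ins_bijective :
    Function.Bijective (fun p : Equiv.Perm (Fin n) × Fin (n + 1) => ins p.1 p.2) := by
  rw [Fintype.bijective_iff_injective_and_card]
  refine ⟨ins_injective, ?_⟩
  simp only [Fintype.card_prod, Fintype.card_perm, Fintype.card_fin]
  rw [Nat.factorial_succ, Nat.mul_comm]

lemma sum_perm_succ {M : Type*} [AddCommMonoid M] (F : Equiv.Perm (Fin (n + 1)) → M) :
    ∑ σ : Equiv.Perm (Fin (n + 1)), F σ =
      ∑ τ : Equiv.Perm (Fin n), ∑ j : Fin (n + 1), F (ins τ j) := by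
  calc ∑ σ : Equiv.Perm (Fin (n + 1)), F σ
      = ∑ p : Equiv.Perm (Fin n) × Fin (n + 1), F (ins p.1 p.2) :=
        (Fintype.sum_bijective _ ins_bijective _ _ (fun p => rfl)).symm
    _ = _ := Fintype.sum_prod_type _

abbrev R2 : Type := MvPolynomial (Fin 2) ℚ

/-- exterior monomial -/
noncomputable def monoE (n k : ℕ) : R2 := X 0 ^ (2 * k) * X 1 ^ (n + 1 - 2 * k)

/-- interior monomial -/
noncomputable def monoI (n k : ℕ) : R2 := X 0 ^ (2 * k + 2) * X 1 ^ (n - 1 - 2 * k)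

lemma D_pow_mul (D : Derivation ℚ R2 R2) (hx : D (X 0) = X 0 * X 1)
    (hy : D (X 1) = X 0 ^ 2) (a b : ℕ) :
    D (X 0 ^ a * X 1 ^ b) =
      (a : R2) * (X 0 ^ a * X 1 ^ (b + 1)) + (b : R2) * (X 0 ^ (a + 2) * X 1 ^ (b - 1)) := by
  rw [Derivation.leibniz, Derivation.leibniz_pow, Derivation.leibniz_pow, hx, hy]
  simp only [smul_eq_mul, nsmul_eq_mul]
  cases a with
  | zero =>
    cases b with
    | zero => simp
    | succ c =>
      simp only [Nat.cast_zero, Nat.add_sub_cancel, pow_zero]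
      push_cast
      ring
  | succ d =>
    cases b with
    | zero => simp only [Nat.cast_zero, Nat.add_sub_cancel, pow_zero]; push_cast; ring
    | succ c =>
      simp only [Nat.add_sub_cancel]
      push_cast
      ring

lemma D_monoE (D : Derivation ℚ R2 R2) (hx : D (X 0) = X 0 * X 1)
    (hy : D (X 1) = X 0 ^ 2) {n k : ℕ} (hk : 2 * k ≤ n + 1) :
    D (monoE n k) =
      (2 * k) • monoE (n + 1) k + (n + 1 - 2 * k) • monoE (n + 1) (k + 1) := by
  rw [monoE, D_pow_mul D hx hy, monoE, monoE]
  have e1 : n + 1 - 2 * k + 1 = n + 1 + 1 - 2 * k := by omega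
  have e2 : n + 1 - 2 * k - 1 = n + 1 + 1 - 2 * (k + 1) := by omega
  have e3 : 2 * k + 2 = 2 * (k + 1) := by omega
  rw [e1, e2, e3, nsmul_eq_mul, nsmul_eq_mul]

lemma D_monoI (D : Derivation ℚ R2 R2) (hx : D (X 0) = X 0 * X 1)
    (hy : D (X 1) = X 0 ^ 2) {n k : ℕ} (hn : 1 ≤ n) (hk : 2 * k ≤ n - 1) :
    D (monoI n k) =
      (2 * k + 2) • monoI (n + 1) k + (n - 1 - 2 * k) • monoI (n + 1) (k + 1) := by
  rw [monoI, D_pow_mul D hx hy, monoI, monoI]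
  have e1 : n - 1 - 2 * k + 1 = n + 1 - 1 - 2 * k := by omega
  have e2 : n - 1 - 2 * k - 1 = n + 1 - 1 - 2 * (k + 1) := by omega
  have e3 : 2 * k + 2 + 2 = 2 * (k + 1) + 2 := by omega
  rw [e1, e2, e3, nsmul_eq_mul, nsmul_eq_mul]

lemma sum_group {N : ℕ} (g : Equiv.Perm (Fin n) → ℕ) (hg : ∀ σ, g σ ≤ N) (f : ℕ → R2) :
    ∑ σ : Equiv.Perm (Fin n), f (g σ) =
      ∑ k ∈ Finset.range (N + 1),
        ((Finset.univ.filter fun σ : Equiv.Perm (Fin n) => g σ = k).card) • f k := by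
  classical
  rw [← Finset.sum_fiberwise_of_maps_to
    (fun σ _ => Finset.mem_range.mpr (Nat.lt_succ_of_le (hg σ)))
    (fun σ => f (g σ))]
  refine Finset.sum_congr rfl fun k _ => ?_
  rw [Finset.sum_congr rfl (fun σ hσ => by rw [(Finset.mem_filter.mp hσ).2]),
    Finset.sum_const]

lemma iterE (D : Derivation ℚ R2 R2) (hx : D (X 0) = X 0 * X 1)
    (hy : D (X 1) = X 0 ^ 2) :
    ∀ n : ℕ, (⇑D)^[n] (X 1) =
      ∑ σ : Equiv.Perm (Fin n), monoE n (extPeakCount n σ) := by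
  intro n
  induction n with
  | zero =>
    simp only [Function.iterate_zero, id_eq]
    have hc : ∀ σ : Equiv.Perm (Fin 0), extPeakCount 0 σ = 0 := fun σ => by
      simp [extPeakCount]
    rw [Finset.sum_congr rfl (fun σ _ => by rw [hc σ]), Finset.sum_const,
      Finset.card_univ, Fintype.card_perm]
    simp [monoE]
  | succ m ih =>
    rw [Function.iterate_succ_apply', ih, map_sum]
    have step : ∀ σ : Equiv.Perm (Fin m), D (monoE m (extPeakCount m σ)) =
        ∑ j : Fin (m + 1), monoE (m + 1) (extPeakCount (m + 1) (ins σ j)) := by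
      intro σ
      rw [sum_ins_ext σ (monoE (m + 1))]
      exact D_monoE D hx hy (ext_bound σ)
    rw [Finset.sum_congr rfl (fun σ _ => step σ)]
    exact (sum_perm_succ (fun σ => monoE (m + 1) (extPeakCount (m + 1) σ))).symm

lemma iterI (D : Derivation ℚ R2 R2) (hx : D (X 0) = X 0 * X 1)
    (hy : D (X 1) = X 0 ^ 2) :
    ∀ n : ℕ, 1 ≤ n → (⇑D)^[n] (X 1) =
      ∑ σ : Equiv.Perm (Fin n), monoI n (intPeakCount n σ) := by
  intro n hn
  induction n, hn using Nat.le_induction with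
  | base =>
    rw [Function.iterate_one, hy]
    have hc : ∀ σ : Equiv.Perm (Fin 1), intPeakCount 1 σ = 0 := fun σ => by
      simp [intPeakCount]
    rw [Finset.sum_congr rfl (fun σ _ => by rw [hc σ]), Finset.sum_const,
      Finset.card_univ, Fintype.card_perm]
    simp [monoI]
  | succ m hm ih =>
    rw [Function.iterate_succ_apply', ih, map_sum]
    have step : ∀ σ : Equiv.Perm (Fin m), D (monoI m (intPeakCount m σ)) =
        ∑ j : Fin (m + 1), monoI (m + 1) (intPeakCount (m + 1) (ins σ j)) := by
      intro σ
      rw [sum_ins_int hm σ (monoI (m + 1))]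
      exact D_monoI D hx hy hm (int_bound σ)
    rw [Finset.sum_congr rfl (fun σ _ => step σ)]
    exact (sum_perm_succ (fun σ => monoI (m + 1) (intPeakCount (m + 1) σ))).symm

end Stmt3Aux


/-- `Dⁿ(y) = Σ_k W(n,k)·x^{2k}·y^{n−2k+1}` for all `n ≥ 0`, and
`Dⁿ(y) = Σ_{k=0}^{⌊(n−1)/2⌋} M(n,k)·x^{2k+2}·y^{n−2k−1}` for all `n ≥ 1`. -/
theorem stmt_3 (D : Derivation ℚ (MvPolynomial (Fin 2) ℚ) (MvPolynomial (Fin 2) ℚ))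
    (hx : D (X 0) = X 0 * X 1) (hy : D (X 1) = X 0 ^ 2) :
    (∀ n : ℕ, (⇑D)^[n] (X 1) = ∑ k ∈ Finset.range ((n + 1) / 2 + 1),
        (extPeakNum n k : MvPolynomial (Fin 2) ℚ) * X 0 ^ (2 * k) * X 1 ^ (n + 1 - 2 * k)) ∧
    (∀ n : ℕ, 1 ≤ n → (⇑D)^[n] (X 1) = ∑ k ∈ Finset.range ((n - 1) / 2 + 1),
        (intPeakNum n k : MvPolynomial (Fin 2) ℚ) * X 0 ^ (2 * k + 2) * X 1 ^ (n - 1 - 2 * k)) := by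
  open Stmt3Aux in
  constructor
  · intro n
    rw [iterE D hx hy n,
      sum_group (extPeakCount n)
        (fun σ => show extPeakCount n σ ≤ (n + 1) / 2 by have := ext_bound σ; omega)
        (monoE n)]
    refine Finset.sum_congr rfl fun k _ => ?_
    have hnum : extPeakNum n k =
        (Finset.univ.filter fun σ : Equiv.Perm (Fin n) => extPeakCount n σ = k).card := rfl
    rw [← hnum, monoE, nsmul_eq_mul, ← mul_assoc]
  · intro n hn
    rw [iterI D hx hy n hn,
      sum_group (intPeakCount n)
        (fun σ => show intPeakCount n σ ≤ (n - 1) / 2 by have := int_bound σ; omega)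
        (monoI n)]
    refine Finset.sum_congr rfl fun k _ => ?_
    have hnum : intPeakNum n k =
        (Finset.univ.filter fun σ : Equiv.Perm (Fin n) => intPeakCount n σ = k).card := rfl
    rw [← hnum, monoI, nsmul_eq_mul, ← mul_assoc]
end

section
/- Let D be the unique derivation of the polynomial ring ℚ[x,y] determined by D(x) = x·y and D(y) = x², and for f ∈ ℚ[x,y] let Gen(f,t) = Σ_{n≥0} Dⁿ(f)·tⁿ/n! in ℚ[x,y][[t]]. Then, writing ' for the formal derivative with respect to t, the following ordinary differential equations hold: (Gen(x,t)')² = Gen(x,t)²·(Gen(x,t)² − x² + y²), and Gen(y,t)' = Gen(y,t)² + (x² − y²); moreover Gen(x,0) = x and Gen(y,0) = y. -/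
open MvPolynomial

/-- `Gen D f = Σ_{n≥0} Dⁿ(f)·tⁿ/n!` in `ℚ[x,y][[t]]`. -/
noncomputable def Gen (D : Derivation ℚ (MvPolynomial (Fin 2) ℚ) (MvPolynomial (Fin 2) ℚ))
    (f : MvPolynomial (Fin 2) ℚ) : PowerSeries (MvPolynomial (Fin 2) ℚ) :=
  PowerSeries.mk fun n => ((n.factorial : ℚ))⁻¹ • (⇑D)^[n] f

open Finset

abbrev RR := MvPolynomial (Fin 2) ℚ

theorem iter_leibniz (D : Derivation ℚ RR RR) (p q : RR) (n : ℕ) :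
    (⇑D)^[n] (p * q) =
      ∑ k ∈ range n.succ, (n.choose k • ((⇑D)^[n - k] p * (⇑D)^[k] q)) := by
  induction n with
  | zero => simp [Finset.range]
  | succ n IH =>
    calc
      (⇑D)^[n + 1] (p * q) =
          D (∑ k ∈ range n.succ,
              n.choose k • ((⇑D)^[n - k] p * (⇑D)^[k] q)) := by
        rw [Function.iterate_succ_apply', IH]
      _ = (∑ k ∈ range n.succ,
            n.choose k • ((⇑D)^[n - k + 1] p * (⇑D)^[k] q)) +
          ∑ k ∈ range n.succ,
            n.choose k • ((⇑D)^[n - k] p * (⇑D)^[k + 1] q) := by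
        rw [map_sum]
        simp_rw [Derivation.map_smul_of_tower, Derivation.leibniz, smul_eq_mul,
          Function.iterate_succ_apply', smul_add, sum_add_distrib]
        rw [add_comm]
        congr 1 <;> exact sum_congr rfl fun k _ => by rw [mul_comm]
      _ = (∑ k ∈ range n.succ,
                n.choose k.succ • ((⇑D)^[n - k] p * (⇑D)^[k + 1] q)) +
              1 • ((⇑D)^[n + 1] p * (⇑D)^[0] q) +
            ∑ k ∈ range n.succ, n.choose k • ((⇑D)^[n - k] p * (⇑D)^[k + 1] q) :=
        ?_
      _ = ((∑ k ∈ range n.succ, n.choose k • ((⇑D)^[n - k] p * (⇑D)^[k + 1] q)) +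
              ∑ k ∈ range n.succ,
                n.choose k.succ • ((⇑D)^[n - k] p * (⇑D)^[k + 1] q)) +
            1 • ((⇑D)^[n + 1] p * (⇑D)^[0] q) := by
        rw [add_comm, add_assoc]
      _ = (∑ i ∈ range n.succ,
              (n + 1).choose (i + 1) • ((⇑D)^[n + 1 - (i + 1)] p * (⇑D)^[i + 1] q)) +
            1 • ((⇑D)^[n + 1] p * (⇑D)^[0] q) := by
        simp_rw [Nat.choose_succ_succ, Nat.succ_sub_succ, add_smul, sum_add_distrib]
      _ = ∑ k ∈ range n.succ.succ,
            n.succ.choose k • ((⇑D)^[n.succ - k] p * (⇑D)^[k] q) := by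
        rw [sum_range_succ' _ n.succ, Nat.choose_zero_right, tsub_zero]
    congr
    refine (sum_range_succ' _ _).trans (congr_arg₂ (· + ·) ?_ ?_)
    · rw [sum_range_succ, Nat.choose_succ_self, zero_smul, add_zero]
      refine sum_congr rfl fun k hk => ?_
      rw [mem_range] at hk
      congr
      omega
    · rw [Nat.choose_zero_right, tsub_zero]


theorem iter_leibniz' (D : Derivation ℚ RR RR) (p q : RR) (n : ℕ) :
    (⇑D)^[n] (p * q) =
      ∑ k ∈ Finset.range n.succ, (n.choose k • ((⇑D)^[k] p * (⇑D)^[n - k] q)) := by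
  have h := Finset.sum_range_reflect
    (fun k => (n.choose k) • ((⇑D)^[k] p * (⇑D)^[n - k] q)) (n+1)
  rw [iter_leibniz, ← h]
  refine Finset.sum_congr rfl fun k hk => ?_
  rw [Finset.mem_range, Nat.lt_succ_iff] at hk
  have h1 : n + 1 - 1 - k = n - k := by omega
  rw [h1, Nat.sub_sub_self hk, Nat.choose_symm hk]

theorem Gen_mul (D : Derivation ℚ RR RR) (f g : RR) :
    Gen D (f * g) = Gen D f * Gen D g := by
  refine PowerSeries.ext fun n => ?_
  rw [PowerSeries.coeff_mul, Finset.Nat.sum_antidiagonal_eq_sum_range_succ_mk]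
  simp only [Gen, PowerSeries.coeff_mk, iter_leibniz', Finset.smul_sum,
    ← Nat.cast_smul_eq_nsmul ℚ]
  refine Finset.sum_congr rfl fun k hk => ?_
  rw [Finset.mem_range, Nat.lt_succ_iff] at hk
  rw [smul_mul_smul_comm, smul_smul]
  congr 1
  rw [Nat.cast_choose ℚ hk]
  have h1 : (k.factorial : ℚ) ≠ 0 := Nat.cast_ne_zero.2 (Nat.factorial_ne_zero k)
  have h2 : ((n-k).factorial : ℚ) ≠ 0 := Nat.cast_ne_zero.2 (Nat.factorial_ne_zero _)
  have h3 : (n.factorial : ℚ) ≠ 0 := Nat.cast_ne_zero.2 (Nat.factorial_ne_zero n)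
  field_simp

theorem Gen_deriv (D : Derivation ℚ RR RR) (f : RR) :
    PowerSeries.derivative RR (Gen D f) = Gen D (D f) := by
  ext n
  rw [PowerSeries.coeff_derivative]
  simp only [Gen, PowerSeries.coeff_mk, ← Function.iterate_succ_apply, Nat.succ_eq_add_one]
  rw [mul_comm, ← Nat.cast_add_one, ← map_natCast (algebraMap ℚ RR) (n+1),
    ← Algebra.smul_def, smul_smul]
  congr 1
  rw [Nat.factorial_succ]
  have h3 : (n.factorial : ℚ) ≠ 0 := Nat.cast_ne_zero.2 (Nat.factorial_ne_zero n)
  have h4 : (n : ℚ) + 1 ≠ 0 := by positivity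
  push_cast
  congr 1
  field_simp

theorem Gen_const (D : Derivation ℚ RR RR) (f : RR) (hf : D f = 0) :
    Gen D f = PowerSeries.C f := by
  have key : ∀ n, n ≠ 0 → (⇑D)^[n] f = 0 := by
    intro n hn
    obtain ⟨m, rfl⟩ := Nat.exists_eq_succ_of_ne_zero hn
    rw [Function.iterate_succ_apply, hf]
    exact Function.iterate_fixed (map_zero D) m
  ext n
  rcases eq_or_ne n 0 with rfl | hn
  · simp [Gen]
  · simp [Gen, key n hn, PowerSeries.coeff_C, hn]

theorem Gen_sub (D : Derivation ℚ RR RR) (f g : RR) :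
    Gen D (f - g) = Gen D f - Gen D g := by
  refine PowerSeries.ext fun n => ?_
  have h : (⇑D)^[n] (f - g) = (⇑D)^[n] f - (⇑D)^[n] g := by
    induction n with
    | zero => simp
    | succ n ih => rw [Function.iterate_succ_apply', Function.iterate_succ_apply',
        Function.iterate_succ_apply', ih, map_sub]
  simp [Gen, h, smul_sub]

/-- `(Gen(x,t)')² = Gen(x,t)²·(Gen(x,t)² − x² + y²)`,
`Gen(y,t)' = Gen(y,t)² + (x² − y²)`, `Gen(x,0) = x` and `Gen(y,0) = y`. -/
theorem stmt_4 (D : Derivation ℚ (MvPolynomial (Fin 2) ℚ) (MvPolynomial (Fin 2) ℚ))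
    (hx : D (X 0) = X 0 * X 1) (hy : D (X 1) = X 0 ^ 2) :
    (PowerSeries.derivative (MvPolynomial (Fin 2) ℚ) (Gen D (X 0))) ^ 2
        = Gen D (X 0) ^ 2 *
          (Gen D (X 0) ^ 2 - PowerSeries.C ((X 0) ^ 2) + PowerSeries.C ((X 1) ^ 2)) ∧
      PowerSeries.derivative (MvPolynomial (Fin 2) ℚ) (Gen D (X 1))
        = Gen D (X 1) ^ 2 + PowerSeries.C ((X 0) ^ 2 - (X 1) ^ 2) ∧
      PowerSeries.constantCoeff (Gen D (X 0)) = X 0 ∧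
      PowerSeries.constantCoeff (Gen D (X 1)) = X 1 := by
  have hDc : D ((X 0 : RR) ^ 2 - X 1 ^ 2) = 0 := by
    rw [map_sub, pow_two, pow_two, D.leibniz, D.leibniz, hx, hy]
    simp only [smul_eq_mul]
    ring
  have key : Gen D (X 0) ^ 2 - Gen D (X 1) ^ 2
      = PowerSeries.C ((X 0) ^ 2) - PowerSeries.C ((X 1) ^ 2) := by
    rw [pow_two, pow_two, ← Gen_mul, ← Gen_mul, ← Gen_sub, ← pow_two, ← pow_two,
      Gen_const D _ hDc, map_sub]
  have h2 : Gen D ((X 0 : RR) ^ 2) = Gen D (X 0) ^ 2 := by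
    rw [pow_two, Gen_mul, ← pow_two]
  refine ⟨?_, ?_, ?_, ?_⟩
  · rw [Gen_deriv, hx, Gen_mul, mul_pow]
    linear_combination (-(Gen D (X 0 : RR)) ^ 2) * key
  · rw [Gen_deriv, hy, h2, map_sub]
    linear_combination key
  · rw [← PowerSeries.coeff_zero_eq_constantCoeff]
    simp [Gen]
  · rw [← PowerSeries.coeff_zero_eq_constantCoeff]
    simp [Gen]
end

section
/- Let n ≥ 0 and let σ be a permutation of [n+1]. Write σ = π (n+1) τ, where π and τ are the (possibly empty) subwords of σ before and after the maximum entry n+1, and let τ' be the reverse of τ. Then the number of exterior peaks of σ equals the number of left peaks of π plus the number of left peaks of τ' plus 1. -/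
/-- The `i`-th entry (1-indexed) of the word `l`, with the convention that
position `0` and positions beyond the length carry the entry `0`. -/
def wordEntry (l : List ℕ) (i : ℕ) : ℕ :=
  if i = 0 then 0 else l.getD (i - 1) 0

/-- The number of exterior peaks of the word `l`: indices `1 ≤ i ≤ m` with
`w_{i−1} < w_i > w_{i+1}` (conventions `w₀ = w_{m+1} = 0`). -/
def wordExtPeaks (l : List ℕ) : ℕ :=
  ((Finset.Icc 1 l.length).filter fun i =>
    wordEntry l (i - 1) < wordEntry l i ∧ wordEntry l (i + 1) < wordEntry l i).card

/-- The number of left peaks of the word `l`: indices `1 ≤ i ≤ m−1` with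
`w_{i−1} < w_i > w_{i+1}` (convention `w₀ = 0`). -/
def wordLeftPeaks (l : List ℕ) : ℕ :=
  ((Finset.Icc 1 (l.length - 1)).filter fun i =>
    wordEntry l (i - 1) < wordEntry l i ∧ wordEntry l (i + 1) < wordEntry l i).card

/-- if `σ = π (n+1) τ` is a permutation of `[n+1]`, then the number of
exterior peaks of `σ` equals the number of left peaks of `π` plus the number of left
peaks of the reverse of `τ` plus `1`. -/
theorem stmt_7 (n : ℕ) (π τ : List ℕ)
    (h : (π ++ (n + 1) :: τ).Perm (List.range' 1 (n + 1))) :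
    wordExtPeaks (π ++ (n + 1) :: τ) = wordLeftPeaks π + wordLeftPeaks τ.reverse + 1 := by
  classical
  set a := π.length with ha
  set b := τ.length with hb
  set σ := π ++ (n + 1) :: τ with hσ
  have hlen : σ.length = a + 1 + b := by
    rw [hσ]; simp [List.length_append]; omega
  -- every entry of σ is between 1 and n+1
  have hmem : ∀ x ∈ σ, 1 ≤ x ∧ x ≤ n + 1 := by
    intro x hx
    have := h.mem_iff.mp hx
    rw [List.mem_range'_1] at this
    omega
  -- n+1 occurs exactly once in σ
  have hcnt : σ.count (n + 1) = 1 := by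
    rw [h.count_eq]
    exact List.count_eq_one_of_mem (List.nodup_range' (s := 1) (n := n + 1))
      (List.mem_range'_1.mpr (by omega))
  have hcnt' : π.count (n + 1) + (1 + τ.count (n + 1)) = 1 := by
    have := hcnt
    rw [hσ, List.count_append, List.count_cons_self] at this
    omega
  have hπn : (n + 1) ∉ π := by
    have : π.count (n + 1) = 0 := by omega
    exact (List.count_eq_zero.mp this)
  have hτn : (n + 1) ∉ τ := by
    have : τ.count (n + 1) = 0 := by omega
    exact (List.count_eq_zero.mp this)
  -- entries of π and τ are ≤ n (as wordEntry values)
  have hπE : ∀ i, wordEntry π i ≤ n := by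
    intro i
    unfold wordEntry
    split
    · omega
    · by_cases hi : i - 1 < π.length
      · rw [List.getD_eq_getElem _ _ hi]
        have hm : π[i - 1] ∈ π := List.getElem_mem _
        have hm' : π[i - 1] ∈ σ := by rw [hσ]; exact List.mem_append_left _ hm
        have h1 := (hmem _ hm').2
        have h2 : π[i - 1] ≠ n + 1 := fun e => hπn (e ▸ hm)
        omega
      · rw [List.getD_eq_default _ _ (by omega)]; omega
  have hτE : ∀ i, wordEntry τ i ≤ n := by
    intro i
    unfold wordEntry
    split
    · omega
    · by_cases hi : i - 1 < τ.length
      · rw [List.getD_eq_getElem _ _ hi]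
        have hm : τ[i - 1] ∈ τ := List.getElem_mem _
        have hm' : τ[i - 1] ∈ σ := by
          rw [hσ]; exact List.mem_append_right _ (List.mem_cons_of_mem _ hm)
        have h1 := (hmem _ hm').2
        have h2 : τ[i - 1] ≠ n + 1 := fun e => hτn (e ▸ hm)
        omega
      · rw [List.getD_eq_default _ _ (by omega)]; omega
  -- entry identification lemmas
  have e1 : ∀ i, i ≤ a → wordEntry σ i = wordEntry π i := by
    intro i hi
    unfold wordEntry
    split
    · rfl
    · rw [hσ, List.getD_append _ _ _ _ (by omega)]
  have e2 : wordEntry σ (a + 1) = n + 1 := by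
    unfold wordEntry
    rw [if_neg (by omega), hσ, List.getD_append_right _ _ _ _ (by omega)]
    have : a + 1 - 1 - π.length = 0 := by omega
    rw [this]
    rfl
  have e3 : ∀ k, 1 ≤ k → wordEntry σ (a + 1 + k) = wordEntry τ k := by
    intro k hk
    unfold wordEntry
    rw [if_neg (by omega), if_neg (by omega), hσ,
      List.getD_append_right _ _ _ _ (by omega)]
    obtain ⟨k', rfl⟩ : ∃ k', k = k' + 1 := ⟨k - 1, by omega⟩
    have : a + 1 + (k' + 1) - 1 - π.length = k' + 1 := by omega
    rw [this]
    simp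
  have erev : ∀ j, j ≤ b + 1 → wordEntry τ.reverse j = wordEntry τ (b + 1 - j) := by
    intro j hj
    unfold wordEntry
    rcases Nat.eq_zero_or_pos j with rfl | hj1
    · rw [if_pos rfl, if_neg (by omega), List.getD_eq_default _ _ (by omega)]
    · rw [if_neg (by omega)]
      by_cases hj2 : j ≤ b
      · rw [if_neg (by omega)]
        rw [List.getD_eq_getElem _ _ (by rw [List.length_reverse]; omega),
          List.getD_eq_getElem _ _ (by omega), List.getElem_reverse]
        congr 1
        omega
      · have hbj : b + 1 - j = 0 := by omega
        rw [hbj, if_pos rfl, List.getD_eq_default _ _ (by rw [List.length_reverse]; omega)]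
  -- the decomposition of the peak set
  have hS : (Finset.Icc 1 σ.length).filter (fun i =>
      wordEntry σ (i - 1) < wordEntry σ i ∧ wordEntry σ (i + 1) < wordEntry σ i)
      = ((Finset.Icc 1 (a - 1)).filter (fun i =>
          wordEntry π (i - 1) < wordEntry π i ∧ wordEntry π (i + 1) < wordEntry π i)
        ∪ {a + 1})
        ∪ ((Finset.Icc 1 (b - 1)).filter (fun i =>
          wordEntry τ.reverse (i - 1) < wordEntry τ.reverse i ∧
            wordEntry τ.reverse (i + 1) < wordEntry τ.reverse i)).image
          (fun j => a + 1 + (b + 1 - j)) := by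
    ext i
    simp only [Finset.mem_filter, Finset.mem_union, Finset.mem_singleton, Finset.mem_Icc,
      Finset.mem_image, hlen]
    constructor
    · rintro ⟨⟨hi1, hi2⟩, hp1, hp2⟩
      by_cases hia : i ≤ a
      · -- peak inside π
        have hne : i ≠ a := by
          intro hieq
          have h2' := e2
          rw [show a + 1 = i + 1 from by omega] at h2'
          rw [h2', e1 i (by omega)] at hp2
          have := hπE i
          omega
        left; left
        simp only [e1 (i - 1) (by omega), e1 i (by omega), e1 (i + 1) (by omega)] at hp1 hp2
        exact ⟨⟨hi1, by omega⟩, hp1, hp2⟩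
      · by_cases hia1 : i = a + 1
        · left; right; exact hia1
        · -- peak inside τ
          obtain ⟨k, rfl⟩ : ∃ k, i = a + 1 + k := ⟨i - (a + 1), by omega⟩
          have hk1 : 1 ≤ k := by omega
          have hkb : k ≤ b := by omega
          have hk2 : 2 ≤ k := by
            by_contra hc
            have hk : k = 1 := by omega
            subst hk
            rw [show a + 1 + 1 - 1 = a + 1 from by omega, e2,
              e3 1 (le_refl _)] at hp1
            have := hτE 1
            omega
          right
          refine ⟨b + 1 - k, ⟨⟨by omega, by omega⟩, ?_⟩, by omega⟩
          rw [show a + 1 + k - 1 = a + 1 + (k - 1) from by omega,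
            e3 (k - 1) (by omega), e3 k (by omega)] at hp1
          rw [show a + 1 + k + 1 = a + 1 + (k + 1) from by omega,
            e3 (k + 1) (by omega), e3 k (by omega)] at hp2
          rw [erev (b + 1 - k - 1) (by omega), erev (b + 1 - k) (by omega),
            erev (b + 1 - k + 1) (by omega),
            show b + 1 - (b + 1 - k - 1) = k + 1 from by omega,
            show b + 1 - (b + 1 - k) = k from by omega,
            show b + 1 - (b + 1 - k + 1) = k - 1 from by omega]
          exact ⟨hp2, hp1⟩
    · rintro ((⟨⟨hi1, hi2⟩, hp1, hp2⟩ | rfl) | ⟨j, ⟨⟨hj1, hj2⟩, hp1, hp2⟩, rfl⟩)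
      · -- from π
        have hia : i ≤ a - 1 := hi2
        have ha1 : 1 ≤ a := by omega
        refine ⟨⟨hi1, by omega⟩, ?_, ?_⟩
        · rw [e1 (i - 1) (by omega), e1 i (by omega)]; exact hp1
        · rw [e1 (i + 1) (by omega), e1 i (by omega)]; exact hp2
      · -- the max position
        refine ⟨⟨by omega, by omega⟩, ?_, ?_⟩
        · rw [show a + 1 - 1 = a from by omega, e2, e1 a (le_refl _)]
          have := hπE a
          omega
        · rw [e2]
          rcases Nat.eq_zero_or_pos b with hb0 | hb0
          · rw [show a + 1 + 1 = a + 1 + 1 from rfl, e3 1 (le_refl _)]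
            have := hτE 1
            omega
          · rw [show a + 1 + 1 = a + 1 + 1 from rfl, e3 1 (le_refl _)]
            have := hτE 1
            omega
      · -- from τ reversed
        set k := b + 1 - j with hk
        have hk2 : 2 ≤ k := by omega
        have hkb : k ≤ b := by omega
        simp only [erev (j - 1) (by omega), erev j (by omega), erev (j + 1) (by omega),
          show b + 1 - (j - 1) = k + 1 from by omega,
          show b + 1 - (j + 1) = k - 1 from by omega, ← hk] at hp1 hp2
        refine ⟨⟨by omega, by omega⟩, ?_, ?_⟩
        · rw [show a + 1 + k - 1 = a + 1 + (k - 1) from by omega,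
            e3 (k - 1) (by omega), e3 k (by omega)]
          exact hp2
        · rw [show a + 1 + k + 1 = a + 1 + (k + 1) from by omega,
            e3 (k + 1) (by omega), e3 k (by omega)]
          exact hp1
  -- now count
  unfold wordExtPeaks wordLeftPeaks
  rw [hS, List.length_reverse]
  rw [Finset.card_union_of_disjoint, Finset.card_union_of_disjoint,
    Finset.card_image_of_injOn, Finset.card_singleton]
  · rw [← ha, ← hb]
    omega
  · intro x hx y hy hxy
    simp only [Finset.coe_filter, Set.mem_setOf_eq, Finset.mem_Icc] at hx hy
    simp only [] at hxy
    omega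
  · rw [Finset.disjoint_left]
    intro x hx hx'
    simp only [Finset.mem_filter, Finset.mem_Icc] at hx
    simp only [Finset.mem_singleton] at hx'
    omega
  · rw [Finset.disjoint_left]
    intro x hx hx'
    simp only [Finset.mem_union, Finset.mem_filter, Finset.mem_Icc,
      Finset.mem_singleton] at hx
    simp only [Finset.mem_image, Finset.mem_filter, Finset.mem_Icc] at hx'
    obtain ⟨j, ⟨⟨hj1, hj2⟩, -⟩, rfl⟩ := hx'
    rcases hx with ⟨⟨-, h2⟩, -⟩ | h3 <;> omega
end

section
/- Let D be the unique derivation of the field of rational functions ℚ(x,y) extending the derivation of ℚ[x,y] determined by D(x) = x·y and D(y) = x². Then for every n ≥ 0, D^{2n}(x^{−1}) = x^{−1}·(y² − x²)ⁿ and D^{2n+1}(x^{−1}) = −x^{−1}·y·(y² − x²)ⁿ. -/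
open MvPolynomial

/-- The field of rational functions `ℚ(x,y)`. -/
noncomputable abbrev QXY := FractionRing (MvPolynomial (Fin 2) ℚ)

/-- The canonical embedding `ℚ[x,y] → ℚ(x,y)`. -/
noncomputable def ι : MvPolynomial (Fin 2) ℚ →+* QXY := algebraMap _ _

lemma ι_X0_ne_zero : ι (X 0 : MvPolynomial (Fin 2) ℚ) ≠ 0 := by
  have : Function.Injective (ι : MvPolynomial (Fin 2) ℚ →+* QXY) :=
    IsFractionRing.injective _ _
  intro h
  exact X_ne_zero 0 (this (by simpa using h))

/-- for the derivation of `ℚ(x,y)` extending `D x = x·y`, `D y = x²`,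
`D^{2n}(x⁻¹) = x⁻¹·(y² − x²)ⁿ` and `D^{2n+1}(x⁻¹) = −x⁻¹·y·(y² − x²)ⁿ`. -/
theorem stmt_8 (D : Derivation ℚ QXY QXY)
    (hx : D (ι (X 0)) = ι (X 0 * X 1)) (hy : D (ι (X 1)) = ι (X 0 ^ 2)) (n : ℕ) :
    (⇑D)^[2 * n] ((ι (X 0))⁻¹) = (ι (X 0))⁻¹ * (ι (X 1) ^ 2 - ι (X 0) ^ 2) ^ n ∧
      (⇑D)^[2 * n + 1] ((ι (X 0))⁻¹)
        = -((ι (X 0))⁻¹ * ι (X 1) * (ι (X 1) ^ 2 - ι (X 0) ^ 2) ^ n) := by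
  set x := ι (X 0 : MvPolynomial (Fin 2) ℚ) with hxdef
  set y := ι (X 1 : MvPolynomial (Fin 2) ℚ) with hydef
  have hx0 : x ≠ 0 := ι_X0_ne_zero
  have hx' : D x = x * y := by rw [hx]; simp [map_mul]; rfl
  have hy' : D y = x ^ 2 := by rw [hy]; simp [map_pow]; rfl
  have hDinv : D x⁻¹ = -(x⁻¹ * y) := by
    rw [Derivation.leibniz_inv, hx', smul_eq_mul]
    field_simp
  have hDu : D (y ^ 2 - x ^ 2) = 0 := by
    rw [map_sub, Derivation.leibniz_pow, Derivation.leibniz_pow, hx', hy']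
    simp [smul_eq_mul]
    ring
  have hDun : ∀ m : ℕ, D ((y ^ 2 - x ^ 2) ^ m) = 0 := by
    intro m
    rw [Derivation.leibniz_pow, hDu]
    simp
  induction n with
  | zero =>
    constructor
    · simp
    · simp [hDinv]
  | succ k ih =>
    obtain ⟨ih1, ih2⟩ := ih
    have step1 : (⇑D)^[2 * (k + 1)] x⁻¹
        = D ((⇑D)^[2 * k + 1] x⁻¹) := by
      have : 2 * (k + 1) = (2 * k + 1) + 1 := by ring
      rw [this, Function.iterate_succ_apply']
    have h1 : (⇑D)^[2 * (k + 1)] x⁻¹ = x⁻¹ * (y ^ 2 - x ^ 2) ^ (k + 1) := by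
      rw [step1, ih2, map_neg, Derivation.leibniz, hDun, Derivation.leibniz, hDinv, hy']
      simp only [smul_eq_mul, smul_zero, zero_add]
      field_simp
      ring
    refine ⟨h1, ?_⟩
    rw [Function.iterate_succ_apply', h1, Derivation.leibniz, hDun, hDinv]
    simp only [smul_eq_mul, smul_zero, zero_add]
    ring
end
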